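/- arXiv:2303.15186 — 8 statements merged into one kernel-verified Lean document; each statement's English description precedes it below -/
import Mathlib

section
/- Let N ≥ 2 and let a, b ∈ ℂ be nonzero. Then every eigenvalue of M(a,b,N) is real if and only if a b is a positive real number (i.e., Im(a b) = 0 and Re(a b) > 0). -/
open Matrix

/-- The open-boundary Hamiltonian of the complex Hatano–Nelson model on `N` sites:
zero diagonal, subdiagonal entries `a` (`M_{i+1,i} = a`), superdiagonal entries `b`
(`M_{i,i+1} = b`), all other entries zero. -/
def hatanoNelson (N : ℕ) (a b : ℂ) : Matrix (Fin N) (Fin N) ℂ :=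
  Matrix.of fun i j =>
    if (i : ℕ) = (j : ℕ) + 1 then a
    else if (j : ℕ) = (i : ℕ) + 1 then b
    else 0

namespace HNaux

open Polynomial

/-- The characteristic matrix of the Hatano–Nelson matrix, written explicitly. -/
noncomputable def T (a b : ℂ) (n : ℕ) : Matrix (Fin n) (Fin n) (Polynomial ℂ) :=
  Matrix.of fun i j =>
    if (i : ℕ) = (j : ℕ) then Polynomial.X
    else if (i : ℕ) = (j : ℕ) + 1 then -Polynomial.C a
    else if (j : ℕ) = (i : ℕ) + 1 then -Polynomial.C b
    else 0

lemma T_apply (a b : ℂ) (n : ℕ) (i j : Fin n) :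
    T a b n i j =
    (if (i : ℕ) = (j : ℕ) then Polynomial.X
    else if (i : ℕ) = (j : ℕ) + 1 then -Polynomial.C a
    else if (j : ℕ) = (i : ℕ) + 1 then -Polynomial.C b
    else 0) := rfl

lemma charmatrix_eq (a b : ℂ) (n : ℕ) :
    charmatrix (hatanoNelson n a b) = T a b n := by
  ext i j
  by_cases h : i = j
  · subst h
    rw [charmatrix_apply_eq]
    simp only [hatanoNelson, T, Matrix.of_apply]
    have h1 : ¬ ((i:ℕ) = (i:ℕ) + 1) := by omega
    simp [h1]
  · rw [charmatrix_apply_ne _ _ _ h]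
    have h' : (i : ℕ) ≠ (j : ℕ) := fun hc => h (Fin.ext hc)
    simp only [hatanoNelson, T, Matrix.of_apply, if_neg h']
    split_ifs <;> simp

lemma T_submatrix (a b : ℂ) (n : ℕ) :
    (T a b (n+1)).submatrix Fin.succ Fin.succ = T a b n := by
  ext i j
  simp only [Matrix.submatrix_apply, T_apply, Fin.val_succ]
  have e1 : ((i:ℕ) + 1 = (j:ℕ) + 1) ↔ (i:ℕ) = (j:ℕ) := by omega
  have e2 : ((i:ℕ) + 1 = (j:ℕ) + 1 + 1) ↔ (i:ℕ) = (j:ℕ) + 1 := by omega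
  have e3 : ((j:ℕ) + 1 = (i:ℕ) + 1 + 1) ↔ (j:ℕ) = (i:ℕ) + 1 := by omega
  simp only [e1, e2, e3]

lemma T_submatrix2 (a b : ℂ) (n : ℕ) :
    (T a b (n+2)).submatrix (Fin.succ ∘ Fin.succ) (Fin.succ ∘ Fin.succ) = T a b n := by
  rw [show (T a b (n+2)).submatrix (Fin.succ ∘ Fin.succ) (Fin.succ ∘ Fin.succ)
      = ((T a b (n+2)).submatrix Fin.succ Fin.succ).submatrix Fin.succ Fin.succ from rfl,
    T_submatrix, T_submatrix]

lemma succAbove_one_zero (n : ℕ) : (1 : Fin (n+2)).succAbove 0 = 0 := by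
  rw [Fin.succAbove_of_castSucc_lt]
  · rfl
  · simp [Fin.lt_def]

lemma succAbove_one_succ (n : ℕ) (j : Fin n) :
    (1 : Fin (n+2)).succAbove j.succ = j.succ.succ := by
  have : (1 : Fin (n+2)) = (0 : Fin (n+1)).succ := rfl
  rw [this, Fin.succ_succAbove_succ, Fin.succAbove_zero]

lemma det_T_rec (a b : ℂ) (n : ℕ) :
    (T a b (n+2)).det =
      Polynomial.X * (T a b (n+1)).det - Polynomial.C (a*b) * (T a b n).det := by
  rw [det_succ_row_zero, Fin.sum_univ_succ, Fin.sum_univ_succ]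
  have hrest : ∀ i : Fin n,
      (-1) ^ (i.succ.succ : ℕ) * T a b (n + 2) 0 i.succ.succ *
        ((T a b (n + 2)).submatrix Fin.succ i.succ.succ.succAbove).det = 0 := by
    intro i
    have : T a b (n + 2) 0 i.succ.succ = 0 := by
      rw [T_apply]
      have h1 : ¬ ((0:ℕ) = (i.succ.succ : Fin (n+2)).val) := by simp [Fin.val_succ]
      have h2 : ¬ ((0:ℕ) = ((i.succ.succ : Fin (n+2)) : ℕ) + 1) := by simp [Fin.val_succ]
      have h3 : ¬ (((i.succ.succ : Fin (n+2)) : ℕ) = 0 + 1) := by simp [Fin.val_succ]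
      simp only [Fin.val_zero, h1, h2, h3, if_false]
    rw [this]; ring
  rw [Finset.sum_eq_zero fun i _ => hrest i]
  have h00 : T a b (n+2) 0 0 = Polynomial.X := by rw [T_apply]; simp
  have h01 : T a b (n+2) 0 (Fin.succ 0) = -Polynomial.C b := by
    rw [T_apply]; simp
  rw [h00, h01, Fin.succAbove_zero, T_submatrix]
  have hinner : ((T a b (n + 2)).submatrix Fin.succ (Fin.succ 0).succAbove).det
      = -Polynomial.C a * (T a b n).det := by
    rw [det_succ_column_zero, Fin.sum_univ_succ]
    have hrest2 : ∀ i : Fin n,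
        (-1) ^ (i.succ : ℕ) *
          ((T a b (n + 2)).submatrix Fin.succ (Fin.succ 0).succAbove) i.succ 0 *
          ((((T a b (n + 2)).submatrix Fin.succ (Fin.succ 0).succAbove)).submatrix
            i.succ.succAbove Fin.succ).det = 0 := by
      intro i
      have : ((T a b (n + 2)).submatrix Fin.succ (Fin.succ 0).succAbove) i.succ 0 = 0 := by
        rw [Matrix.submatrix_apply, show (Fin.succ (0 : Fin (n+1))) = (1 : Fin (n+2)) from rfl,
          succAbove_one_zero, T_apply]
        simp [Fin.val_succ]
      rw [this]; ring
    rw [Finset.sum_eq_zero fun i _ => hrest2 i]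
    have hS00 : ((T a b (n + 2)).submatrix Fin.succ (Fin.succ 0).succAbove) 0 0
        = -Polynomial.C a := by
      rw [Matrix.submatrix_apply, show (Fin.succ (0 : Fin (n+1))) = (1 : Fin (n+2)) from rfl,
        succAbove_one_zero, T_apply]
      simp [Fin.val_succ]
    have hSsub : (((T a b (n + 2)).submatrix Fin.succ (Fin.succ 0).succAbove).submatrix
        (Fin.succAbove 0) Fin.succ) = T a b n := by
      rw [Fin.succAbove_zero]
      refine Matrix.ext fun i j => ?_
      simp only [Matrix.submatrix_apply]
      rw [show (Fin.succ (0 : Fin (n+1))) = (1 : Fin (n+2)) from rfl, succAbove_one_succ]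
      exact congrFun (congrFun (T_submatrix2 a b n) i) j
    rw [hS00, hSsub]
    simp
  rw [hinner, Polynomial.C_mul]
  simp only [Fin.val_zero, Fin.val_succ, pow_zero, pow_one]
  ring

/-- The family of polynomials satisfying the Hatano–Nelson recurrence. -/
noncomputable def hnPoly (t : ℂ) : ℕ → Polynomial ℂ
  | 0 => 1
  | 1 => Polynomial.X
  | (n+2) => Polynomial.X * hnPoly t (n+1) - Polynomial.C t * hnPoly t n

lemma charpoly_eq (a b : ℂ) (n : ℕ) :
    (hatanoNelson n a b).charpoly = hnPoly (a*b) n := by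
  induction n using Nat.twoStepInduction with
  | zero =>
    show (charmatrix (hatanoNelson 0 a b)).det = _
    rw [Matrix.det_isEmpty]; rfl
  | one =>
    show (charmatrix (hatanoNelson 1 a b)).det = _
    rw [Matrix.det_fin_one, charmatrix_apply_eq]
    show Polynomial.X - Polynomial.C 0 = Polynomial.X
    simp
  | more n ih1 ih2 =>
    show (charmatrix (hatanoNelson (n+2) a b)).det = _
    rw [charmatrix_eq, det_T_rec, ← charmatrix_eq a b (n+1), ← charmatrix_eq a b n]
    show Polynomial.X * (hatanoNelson (n+1) a b).charpoly
      - Polynomial.C (a*b) * (hatanoNelson n a b).charpoly = _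
    rw [ih1, ih2]
    rfl

lemma hnPoly_monic (t : ℂ) (n : ℕ) : (hnPoly t n).Monic := by
  have := (hatanoNelson n t 1).charpoly_monic
  rwa [charpoly_eq, mul_one] at this

lemma hnPoly_natDegree (t : ℂ) (n : ℕ) : (hnPoly t n).natDegree = n := by
  have := (hatanoNelson n t 1).charpoly_natDegree_eq_dim
  rwa [charpoly_eq, mul_one, Fintype.card_fin] at this

lemma hnPoly_coeff (t : ℂ) (n : ℕ) :
    (hnPoly t (n+2)).coeff n = -((n:ℂ)+1) * t := by
  induction n using Nat.twoStepInduction with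
  | zero =>
    show (Polynomial.X * hnPoly t 1 - Polynomial.C t * hnPoly t 0).coeff 0 = _
    show (Polynomial.X * Polynomial.X - Polynomial.C t * 1).coeff 0 = _
    simp [Polynomial.coeff_sub, Polynomial.mul_coeff_zero]
  | one =>
    show (Polynomial.X * hnPoly t 2 - Polynomial.C t * hnPoly t 1).coeff 1 = _
    rw [Polynomial.coeff_sub, Polynomial.coeff_X_mul]
    show (Polynomial.X * Polynomial.X - Polynomial.C t * 1).coeff 0
      - (Polynomial.C t * Polynomial.X).coeff 1 = _
    simp [Polynomial.coeff_sub, Polynomial.mul_coeff_zero]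
    ring
  | more n ih1 ih2 =>
    show (Polynomial.X * hnPoly t (n+3) - Polynomial.C t * hnPoly t (n+2)).coeff (n+2) = _
    rw [Polynomial.coeff_sub, Polynomial.coeff_X_mul, Polynomial.coeff_C_mul, ih2,
      show (hnPoly t (n+2)).coeff (n+2) = 1 from by
        have h := (hnPoly_monic t (n+2)).coeff_natDegree
        rwa [hnPoly_natDegree] at h]
    push_cast
    ring

lemma im_coeff_prod (s : Multiset ℂ) :
    (∀ z ∈ s, z.im = 0) → ∀ n : ℕ,
      (((s.map (fun z => Polynomial.X - Polynomial.C z)).prod).coeff n).im = 0 := by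
  induction s using Multiset.induction_on with
  | empty =>
    intro _ n
    simp [Polynomial.coeff_one, apply_ite Complex.im]
  | cons z s ih =>
    intro h n
    simp only [Multiset.map_cons, Multiset.prod_cons]
    rw [Polynomial.coeff_mul, Complex.im_sum]
    refine Finset.sum_eq_zero fun x _ => ?_
    rw [Complex.mul_im]
    have h1 : ((Polynomial.X - Polynomial.C z).coeff x.1).im = 0 := by
      rw [Polynomial.coeff_sub, Polynomial.coeff_X, Polynomial.coeff_C]
      have hz := h z (Multiset.mem_cons_self z s)
      split_ifs <;> simp [hz]
    have h2 := ih (fun w hw => h w (Multiset.mem_cons_of_mem hw)) x.2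
    rw [h1, h2]
    ring

lemma exists_eigenvector {n : ℕ} (M : Matrix (Fin n) (Fin n) ℂ) (μ : ℂ)
    (h : M.charpoly.IsRoot μ) :
    ∃ v : Fin n → ℂ, v ≠ 0 ∧ M.mulVec v = μ • v := by
  have hdet : (Matrix.scalar (Fin n) μ - M).det = 0 := by
    have := h
    rw [Polynomial.IsRoot, Matrix.charpoly, eval_det, matPolyEquiv_charmatrix] at this
    rwa [Polynomial.eval_sub, Polynomial.eval_X, Polynomial.eval_C] at this
  obtain ⟨v, hv, hMv⟩ := (Matrix.exists_mulVec_eq_zero_iff).2 hdet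
  refine ⟨v, hv, ?_⟩
  rw [Matrix.sub_mulVec] at hMv
  have hscal : (Matrix.scalar (Fin n) μ).mulVec v = μ • v := by
    rw [show Matrix.scalar (Fin n) μ = μ • (1 : Matrix (Fin n) (Fin n) ℂ) from by
      simp [Matrix.scalar, Matrix.smul_one_eq_diagonal]]
    rw [Matrix.smul_mulVec, Matrix.one_mulVec]
  rw [hscal] at hMv
  exact (sub_eq_zero.mp hMv).symm

lemma root_im_eq_zero_of_hermitian {n : ℕ} {M : Matrix (Fin n) (Fin n) ℂ}
    (hM : Mᴴ = M) {μ : ℂ} (h : M.charpoly.IsRoot μ) : μ.im = 0 := by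
  obtain ⟨v, hv, hMv⟩ := exists_eigenvector M μ h
  set t : ℂ := dotProduct (star v) v with ht
  set s : ℂ := dotProduct (star v) (M.mulVec v) with hs
  have hts : s = μ * t := by
    rw [hs, hMv, dotProduct_smul, smul_eq_mul]
  have hstar : star s = s := by
    conv_lhs => rw [hs, Matrix.star_dotProduct, star_star, Matrix.star_mulVec, hM,
      ← Matrix.dotProduct_mulVec]
  have htreal : t = ((∑ i, Complex.normSq (v i) : ℝ) : ℂ) := by
    rw [ht, dotProduct]
    push_cast
    refine Finset.sum_congr rfl fun i _ => ?_
    rw [Pi.star_apply, Complex.star_def, Complex.normSq_eq_conj_mul_self]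
  have htim : t.im = 0 := by rw [htreal]; simp
  have htre : 0 < t.re := by
    rw [htreal]
    simp only [Complex.ofReal_re]
    obtain ⟨i, hi⟩ := Function.ne_iff.mp hv
    exact Finset.sum_pos' (fun j _ => Complex.normSq_nonneg _)
      ⟨i, Finset.mem_univ i, Complex.normSq_pos.2 hi⟩
  have hsim : s.im = 0 := by
    have := congrArg Complex.im hstar
    simp only [Complex.star_def, Complex.conj_im] at this
    linarith
  rw [hts, Complex.mul_im, htim, mul_zero, zero_add] at hsim
  exact (mul_eq_zero.mp hsim).resolve_right (ne_of_gt htre)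

lemma root_re_eq_zero_of_skew {n : ℕ} {M : Matrix (Fin n) (Fin n) ℂ}
    (hM : Mᴴ = -M) {μ : ℂ} (h : M.charpoly.IsRoot μ) : μ.re = 0 := by
  obtain ⟨v, hv, hMv⟩ := exists_eigenvector M μ h
  set t : ℂ := dotProduct (star v) v with ht
  set s : ℂ := dotProduct (star v) (M.mulVec v) with hs
  have hts : s = μ * t := by
    rw [hs, hMv, dotProduct_smul, smul_eq_mul]
  have hstar : star s = -s := by
    conv_lhs => rw [hs, Matrix.star_dotProduct, star_star, Matrix.star_mulVec, hM,
      Matrix.vecMul_neg, neg_dotProduct, ← Matrix.dotProduct_mulVec]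
  have htreal : t = ((∑ i, Complex.normSq (v i) : ℝ) : ℂ) := by
    rw [ht, dotProduct]
    push_cast
    refine Finset.sum_congr rfl fun i _ => ?_
    rw [Pi.star_apply, Complex.star_def, Complex.normSq_eq_conj_mul_self]
  have htim : t.im = 0 := by rw [htreal]; simp
  have htre : 0 < t.re := by
    rw [htreal]
    simp only [Complex.ofReal_re]
    obtain ⟨i, hi⟩ := Function.ne_iff.mp hv
    exact Finset.sum_pos' (fun j _ => Complex.normSq_nonneg _)
      ⟨i, Finset.mem_univ i, Complex.normSq_pos.2 hi⟩
  have hsre : s.re = 0 := by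
    have := congrArg Complex.re hstar
    simp only [Complex.star_def, Complex.conj_re, Complex.neg_re] at this
    linarith
  rw [hts, Complex.mul_re, htim, mul_zero, sub_zero] at hsre
  exact (mul_eq_zero.mp hsre).resolve_right (ne_of_gt htre)

lemma hn_hermitian (n : ℕ) (c : ℝ) :
    (hatanoNelson n (c:ℂ) (c:ℂ))ᴴ = hatanoNelson n (c:ℂ) (c:ℂ) := by
  ext i j
  simp only [Matrix.conjTranspose_apply, hatanoNelson, Matrix.of_apply,
    apply_ite (star : ℂ → ℂ), star_zero, Complex.star_def, Complex.conj_ofReal]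
  split_ifs <;> rfl

lemma hn_skew (n : ℕ) (c : ℝ) :
    (hatanoNelson n (c:ℂ) (-(c:ℂ)))ᴴ = -(hatanoNelson n (c:ℂ) (-(c:ℂ))) := by
  ext i j
  simp only [Matrix.conjTranspose_apply, Matrix.neg_apply, hatanoNelson, Matrix.of_apply,
    apply_ite (star : ℂ → ℂ), star_zero, star_neg, Complex.star_def, Complex.conj_ofReal,
    apply_ite (Neg.neg : ℂ → ℂ), neg_zero, neg_neg]
  split_ifs <;> first | rfl | (exfalso; omega)

end HNaux

open Polynomial in
/-- For `N ≥ 2` and nonzero `a, b ∈ ℂ`, every eigenvalue of the Hatano–Nelson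
matrix (every root of its characteristic polynomial) is real if and only if
`ab` is a positive real number. -/
theorem hatanoNelson_real_spectrum_iff (N : ℕ) (hN : 2 ≤ N) (a b : ℂ)
    (ha : a ≠ 0) (hb : b ≠ 0) :
    (∀ μ : ℂ, ((hatanoNelson N a b).charpoly).IsRoot μ → μ.im = 0) ↔
      ((a * b).im = 0 ∧ 0 < (a * b).re) := by
  have hab : a * b ≠ 0 := mul_ne_zero ha hb
  constructor
  · intro H
    set p := (hatanoNelson N a b).charpoly with hp
    have hmonic : p.Monic := Matrix.charpoly_monic _
    have hdeg : p.natDegree = N := by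
      rw [hp, Matrix.charpoly_natDegree_eq_dim, Fintype.card_fin]
    have hsplit : Multiset.card p.roots = p.natDegree :=
      (Polynomial.splits_iff_card_roots).1 (IsAlgClosed.splits p)
    have hprod : (p.roots.map (fun z => X - C z)).prod = p :=
      Polynomial.prod_multiset_X_sub_C_of_monic_of_roots_card_eq hmonic hsplit
    have hroots_im : ∀ z ∈ p.roots, z.im = 0 := fun z hz =>
      H z (Polynomial.isRoot_of_mem_roots hz)
    have hco : ∀ k, (p.coeff k).im = 0 := fun k => by
      rw [← hprod]; exact HNaux.im_coeff_prod _ hroots_im k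
    obtain ⟨m, rfl⟩ : ∃ m, N = m + 2 := ⟨N - 2, by omega⟩
    have hcm : p.coeff m = -((m:ℂ)+1) * (a*b) := by
      rw [hp, HNaux.charpoly_eq, HNaux.hnPoly_coeff]
    have him : (a*b).im = 0 := by
      have h1 := hco m
      rw [hcm] at h1
      have e : -((m:ℂ)+1) * (a*b) = ((-((m:ℝ)+1) : ℝ) : ℂ) * (a*b) := by push_cast; ring
      rw [e, Complex.mul_im, Complex.ofReal_re, Complex.ofReal_im, zero_mul, add_zero] at h1
      have hm1 : -((m:ℝ)+1) ≠ 0 := by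
        have : (0:ℝ) < (m:ℝ) + 1 := by positivity
        linarith
      exact (mul_eq_zero.mp h1).resolve_left hm1
    refine ⟨him, ?_⟩
    by_contra hre
    push_neg at hre
    have habre : (a*b).re < 0 := by
      rcases lt_or_eq_of_le hre with h | h
      · exact h
      · exact absurd (Complex.ext (by simp [h]) (by simp [him])) hab
    set c : ℝ := Real.sqrt (-(a*b).re) with hcdef
    have hcc : (c:ℝ) * c = -(a*b).re := Real.mul_self_sqrt (by linarith)
    have hc2 : (c:ℂ) * (-(c:ℂ)) = a * b := by
      have e1 : (c:ℂ) * (-(c:ℂ)) = ((-(c*c) : ℝ) : ℂ) := by push_cast; ring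
      rw [e1, hcc, neg_neg]
      exact Complex.ext (by simp) (by simp [him])
    have hcp : p = (hatanoNelson (m+2) (c:ℂ) (-(c:ℂ))).charpoly := by
      rw [hp, HNaux.charpoly_eq, HNaux.charpoly_eq, hc2]
    have hzero : ∀ z ∈ p.roots, z = 0 := by
      intro z hz
      have h1 : z.im = 0 := hroots_im z hz
      have h2 : z.re = 0 :=
        HNaux.root_re_eq_zero_of_skew (HNaux.hn_skew (m+2) c)
          (by rw [← hcp]; exact Polynomial.isRoot_of_mem_roots hz)
      exact Complex.ext (by simp [h2]) (by simp [h1])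
    have hXpow : p = X ^ (m+2) := by
      conv_lhs => rw [← hprod]
      rw [Multiset.map_congr rfl (fun z hz => by
        rw [hzero z hz, map_zero, sub_zero] : ∀ z ∈ p.roots, X - C z = X)]
      rw [Multiset.map_const', Multiset.prod_replicate, hsplit, hdeg]
    rw [hXpow, Polynomial.coeff_X_pow, if_neg (by omega : ¬ m = m+2)] at hcm
    have habz : a * b = 0 := by
      have hm1 : -((m:ℂ)+1) ≠ 0 := by
        intro hc
        have : ((m:ℂ)+1) = 0 := by linear_combination -hc
        exact Nat.cast_add_one_ne_zero m this
      exact (mul_eq_zero.mp hcm.symm).resolve_left hm1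
    exact hab habz
  · rintro ⟨him, hre⟩ μ hroot
    set c : ℝ := Real.sqrt ((a*b).re) with hcdef
    have hcc : (c:ℝ) * c = (a*b).re := Real.mul_self_sqrt (le_of_lt hre)
    have hc2 : (c:ℂ) * (c:ℂ) = a * b := by
      have e1 : (c:ℂ) * (c:ℂ) = ((c*c : ℝ) : ℂ) := by push_cast; ring
      rw [e1, hcc]
      exact Complex.ext (by simp) (by simp [him])
    have hcp : (hatanoNelson N a b).charpoly = (hatanoNelson N (c:ℂ) (c:ℂ)).charpoly := by
      rw [HNaux.charpoly_eq, HNaux.charpoly_eq, hc2]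
    exact HNaux.root_im_eq_zero_of_hermitian (HNaux.hn_hermitian N c)
      (by rw [← hcp]; exact hroot)
end

section
/- Let t_l, t_r > 0 be real and let E ∈ ℂ. The two roots β₊, β₋ of the quadratic t_r z² − E z + t_l = 0 satisfy |β₊| = |β₋| if and only if E is real and |E| ≤ 2√(t_l t_r); moreover, when this holds, |β₊| = |β₋| = √(t_l/t_r). Consequently the OBC spectrum of the Hatano–Nelson model is the real interval [−2√(t_l t_r), 2√(t_l t_r)]. -/
open Complex

lemma hn_vieta {tl tr : ℝ} {E bp bm : ℂ}
    (hfac : ∀ z : ℂ, (tr:ℂ) * z ^ 2 - E * z + (tl:ℂ) = (tr:ℂ) * (z - bp) * (z - bm)) :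
    E = tr * (bp + bm) ∧ (tl:ℂ) = tr * (bp * bm) := by
  have h0 := hfac 0
  have h1 := hfac 1
  have hm := hfac (-1)
  constructor
  · linear_combination (hm - h1) / 2
  · linear_combination h0

lemma hn_tr_sqrt {tl tr : ℝ} (htr : 0 < tr) :
    tr * Real.sqrt (tl / tr) = Real.sqrt (tl * tr) := by
  rw [show tl * tr = tr ^ 2 * (tl / tr) by field_simp,
    Real.sqrt_mul (sq_nonneg tr), Real.sqrt_sq htr.le]

lemma hn_root_mod {tl tr : ℝ} (htl : 0 < tl) (htr : 0 < tr) {e : ℝ} {z : ℂ}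
    (hEb : |e| ≤ 2 * Real.sqrt (tl * tr))
    (hz : (tr:ℂ) * z ^ 2 - (e:ℂ) * z + (tl:ℂ) = 0) :
    ‖z‖ = Real.sqrt (tl / tr) := by
  have he2 : e ^ 2 ≤ 4 * (tl * tr) := by
    nlinarith [Real.sq_sqrt (mul_nonneg htl.le htr.le), abs_nonneg e, _root_.sq_abs e,
      Real.sqrt_nonneg (tl * tr)]
  obtain ⟨x, y⟩ := z
  rw [Complex.ext_iff] at hz
  simp only [Complex.add_re, Complex.add_im, Complex.sub_re, Complex.sub_im,
    Complex.mul_re, Complex.mul_im, Complex.ofReal_re, Complex.ofReal_im, pow_two,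
    Complex.zero_re, Complex.zero_im] at hz
  obtain ⟨h1, h2⟩ := hz
  have key : x ^ 2 + y ^ 2 = tl / tr := by
    rcases eq_or_ne y 0 with hy0 | hy0
    · subst hy0
      have he4 : e ^ 2 = 4 * (tl * tr) := by nlinarith [sq_nonneg (2 * tr * x - e)]
      have hsq : (2 * tr * x - e) ^ 2 = 0 := by linear_combination he4 + 4 * tr * h1
      have hxe : x = e / (2 * tr) := by
        have := pow_eq_zero_iff (n := 2) (by norm_num) |>.mp hsq
        field_simp
        linarith
      subst hxe
      field_simp
      nlinarith
    · have he : e = 2 * tr * x := by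
        have h3 : y * (2 * tr * x - e) = 0 := by ring_nf; ring_nf at h2; linarith
        rcases mul_eq_zero.mp h3 with h | h
        · exact absurd h hy0
        · linarith
      field_simp
      linear_combination -h1 - x * he
  rw [Complex.norm_def, Complex.normSq_mk]
  rw [show x * x + y * y = tl / tr by nlinarith]

lemma hn_fwd {tl tr : ℝ} (htl : 0 < tl) (htr : 0 < tr) {E bp bm : ℂ}
    (hE : E = tr * (bp + bm)) (hP : (tl:ℂ) = tr * (bp * bm))
    (hab : ‖bp‖ = ‖bm‖) :
    E.im = 0 ∧ |E.re| ≤ 2 * Real.sqrt (tl * tr) ∧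
    ‖bp‖ = Real.sqrt (tl / tr) := by
  have hprod : bp * bm = ((tl / tr : ℝ) : ℂ) := by
    rw [Complex.ofReal_div]
    have htr0 : (tr:ℂ) ≠ 0 := Complex.ofReal_ne_zero.mpr htr.ne'
    field_simp
    linear_combination -hP
  have habs : ‖bp‖ * ‖bm‖ = tl / tr := by
    rw [← norm_mul, hprod, Complex.norm_real, Real.norm_eq_abs, abs_of_pos (div_pos htl htr)]
  have hsq : ‖bp‖ ^ 2 = tl / tr := by rw [← habs, hab]; ring
  have habp : ‖bp‖ = Real.sqrt (tl / tr) := by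
    rw [← hsq, Real.sqrt_sq (norm_nonneg bp)]
  have hbp0 : bp ≠ 0 := by
    intro h
    rw [h] at hsq
    simp at hsq
    have : (0:ℝ) < tl / tr := div_pos htl htr
    rw [← hsq] at this
    exact lt_irrefl 0 this
  have hnorm : Complex.normSq bp = tl / tr := by
    rw [← Complex.sq_norm, hsq]
  have hconj : bm = starRingEnd ℂ bp := by
    have h1 : bp * bm = bp * starRingEnd ℂ bp := by
      rw [Complex.mul_conj, hnorm, hprod]
    exact mul_left_cancel₀ hbp0 h1
  have hEre : E = ((2 * tr * bp.re : ℝ) : ℂ) := by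
    rw [hE, hconj, Complex.add_conj]
    push_cast
    ring
  refine ⟨by rw [hEre]; simp, ?_, habp⟩
  rw [hEre]
  simp only [Complex.ofReal_re]
  have h1 : |bp.re| ≤ ‖bp‖ := Complex.abs_re_le_norm bp
  calc |2 * tr * bp.re| = 2 * tr * |bp.re| := by
        rw [abs_mul, abs_of_pos (by positivity : (0:ℝ) < 2 * tr)]
    _ ≤ 2 * tr * ‖bp‖ := by nlinarith
    _ = 2 * Real.sqrt (tl * tr) := by rw [habp, mul_assoc, hn_tr_sqrt htr]

lemma hn_construct {tl tr : ℝ} (htl : 0 < tl) (htr : 0 < tr) {x : ℝ}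
    (hx : |x| ≤ 2 * Real.sqrt (tl * tr)) :
    ∀ z : ℂ, (tr:ℂ) * z ^ 2 - (x:ℂ) * z + (tl:ℂ) =
      (tr:ℂ) * (z - ((x:ℂ) + (Real.sqrt (4 * tl * tr - x^2) : ℝ) * I) / (2*tr))
        * (z - ((x:ℂ) - (Real.sqrt (4 * tl * tr - x^2) : ℝ) * I) / (2*tr)) := by
  have hd : (0:ℝ) ≤ 4 * tl * tr - x^2 := by
    nlinarith [Real.sq_sqrt (mul_nonneg htl.le htr.le), abs_nonneg x, _root_.sq_abs x,
      Real.sqrt_nonneg (tl * tr)]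
  have hs2 : ((Real.sqrt (4 * tl * tr - x^2) : ℝ) : ℂ) ^ 2 = 4 * (tl:ℂ) * tr - (x:ℂ)^2 := by
    rw [← Complex.ofReal_pow, Real.sq_sqrt hd]
    push_cast
    ring
  intro z
  have htr0 : (tr:ℂ) ≠ 0 := Complex.ofReal_ne_zero.mpr htr.ne'
  field_simp
  linear_combination (((Real.sqrt (4 * tl * tr - x^2) : ℝ):ℂ)^2) * Complex.I_sq
    - hs2

/-- For the Hatano–Nelson model with `t_l, t_r > 0`: the two roots `β₊, β₋` of
`t_r z² − E z + t_l = 0` have equal modulus iff `E` is real with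
`|E| ≤ 2√(t_l t_r)`, in which case `|β₊| = |β₋| = √(t_l/t_r)`; consequently the
OBC spectrum (the set of `E` satisfying the GBZ condition) is exactly the real
interval `[−2√(t_l t_r), 2√(t_l t_r)]`. -/
theorem hatanoNelson_OBC_spectrum (tl tr : ℝ) (htl : 0 < tl) (htr : 0 < tr)
    (E βp βm : ℂ)
    (hfac : ∀ z : ℂ, (tr : ℂ) * z ^ 2 - E * z + (tl : ℂ) =
      (tr : ℂ) * (z - βp) * (z - βm)) :
    (‖βp‖ = ‖βm‖ ↔
      E.im = 0 ∧ |E.re| ≤ 2 * Real.sqrt (tl * tr)) ∧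
    (‖βp‖ = ‖βm‖ →
      ‖βp‖ = Real.sqrt (tl / tr) ∧ ‖βm‖ = Real.sqrt (tl / tr)) ∧
    {E' : ℂ | ∃ bp bm : ℂ,
        (∀ z : ℂ, (tr : ℂ) * z ^ 2 - E' * z + (tl : ℂ) =
          (tr : ℂ) * (z - bp) * (z - bm)) ∧
        ‖bp‖ = ‖bm‖} =
      (fun x : ℝ => (x : ℂ)) ''
        Set.Icc (-(2 * Real.sqrt (tl * tr))) (2 * Real.sqrt (tl * tr)) := by
  obtain ⟨hE, hP⟩ := hn_vieta hfac
  refine ⟨?_, ?_, ?_⟩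
  · constructor
    · intro hab
      obtain ⟨h1, h2, _⟩ := hn_fwd htl htr hE hP hab
      exact ⟨h1, h2⟩
    · rintro ⟨him, hre⟩
      have hEeq : E = ((E.re : ℝ) : ℂ) := by
        apply Complex.ext <;> simp [him]
      have hp : (tr:ℂ) * βp ^ 2 - E * βp + (tl:ℂ) = 0 := by rw [hfac βp]; ring
      have hm : (tr:ℂ) * βm ^ 2 - E * βm + (tl:ℂ) = 0 := by rw [hfac βm]; ring
      rw [hEeq] at hp hm
      rw [hn_root_mod htl htr hre hp, hn_root_mod htl htr hre hm]
  · intro hab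
    obtain ⟨_, _, h3⟩ := hn_fwd htl htr hE hP hab
    exact ⟨h3, hab ▸ h3⟩
  · ext E'
    simp only [Set.mem_setOf_eq, Set.mem_image]
    constructor
    · rintro ⟨bp, bm, hf, hab⟩
      obtain ⟨hE', hP'⟩ := hn_vieta hf
      obtain ⟨h1, h2, _⟩ := hn_fwd htl htr hE' hP' hab
      refine ⟨E'.re, ⟨(abs_le.mp h2).1, (abs_le.mp h2).2⟩, ?_⟩
      apply Complex.ext <;> simp [h1]
    · rintro ⟨x, hx, rfl⟩
      have hxb : |x| ≤ 2 * Real.sqrt (tl * tr) := abs_le.mpr ⟨by linarith [hx.1], hx.2⟩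
      have hf := hn_construct htl htr hxb
      refine ⟨_, _, hf, ?_⟩
      have hp : (tr:ℂ) * (((x:ℂ) + (Real.sqrt (4 * tl * tr - x^2) : ℝ) * I) / (2*tr)) ^ 2
          - (x:ℂ) * (((x:ℂ) + (Real.sqrt (4 * tl * tr - x^2) : ℝ) * I) / (2*tr)) + (tl:ℂ) = 0 := by
        rw [hf _]; ring
      have hm : (tr:ℂ) * (((x:ℂ) - (Real.sqrt (4 * tl * tr - x^2) : ℝ) * I) / (2*tr)) ^ 2
          - (x:ℂ) * (((x:ℂ) - (Real.sqrt (4 * tl * tr - x^2) : ℝ) * I) / (2*tr)) + (tl:ℂ) = 0 := by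
        rw [hf _]; ring
      rw [hn_root_mod htl htr hxb hp, hn_root_mod htl htr hxb hm]
end

section
/- Let t_l, t_r > 0 be real and let β ∈ ℂ∖{0}. Set E = a₁(β) = t_l β⁻¹ + t_r β. Then the two roots of t_r z² − E z + t_l = 0 (one of which is β) have equal modulus if and only if |β| = √(t_l/t_r). Hence the generalized Brillouin zone of the Hatano–Nelson model is exactly the circle of radius √(t_l/t_r) centered at the origin, a closed loop with 0 in its interior. -/
lemma hatanoNelson_key (tl tr : ℝ) (htl : 0 < tl) (htr : 0 < tr)
    (β : ℂ) (hβ : β ≠ 0) :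
    (∃ β' : ℂ,
        (∀ z : ℂ, (tr : ℂ) * z ^ 2 - ((tl : ℂ) * β⁻¹ + (tr : ℂ) * β) * z + (tl : ℂ) =
          (tr : ℂ) * (z - β) * (z - β')) ∧
        ‖β‖ = ‖β'‖) ↔
      ‖β‖ = Real.sqrt (tl / tr) := by
  have htr0 : (tr : ℂ) ≠ 0 := by exact_mod_cast htr.ne'
  constructor
  · rintro ⟨β', h, habs⟩
    have h0 := h 0
    have hprod : (tl : ℂ) = (tr : ℂ) * β * β' := by
      rw [show (tr : ℂ) * (0 - β) * (0 - β') = (tr : ℂ) * β * β' by ring] at h0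
      simpa using h0
    have habs2 : tl = tr * ‖β‖ ^ 2 := by
      have := congrArg (‖·‖) hprod
      simp only [norm_mul, Complex.norm_real, Real.norm_eq_abs, abs_of_pos htl, abs_of_pos htr] at this
      rw [this, ← habs]; ring
    have hsq : ‖β‖ ^ 2 = tl / tr := by
      rw [habs2]; field_simp
    rw [← hsq, Real.sqrt_sq (norm_nonneg β)]
  · intro h
    have hsq : ‖β‖ ^ 2 = tl / tr := by
      rw [h, Real.sq_sqrt (by positivity)]
    have htl' : tl = tr * ‖β‖ ^ 2 := by
      field_simp at hsq; linarith [hsq]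
    refine ⟨(tl : ℂ) / ((tr : ℂ) * β), fun z => ?_, ?_⟩
    · field_simp
      ring
    · rw [norm_div, norm_mul, Complex.norm_real, Complex.norm_real, Real.norm_eq_abs, Real.norm_eq_abs,
        abs_of_pos htl, abs_of_pos htr]
      have hb : ‖β‖ ≠ 0 := norm_ne_zero_iff.mpr hβ
      rw [htl']
      field_simp
/-- For the Hatano–Nelson model with `t_l, t_r > 0` and `β ≠ 0`, setting
`E = t_l β⁻¹ + t_r β`, the two roots of `t_r z² − E z + t_l = 0` (one of which
is `β`) have equal modulus iff `|β| = √(t_l/t_r)`. Hence the generalized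
Brillouin zone is exactly the circle of radius `√(t_l/t_r)` about the origin. -/
theorem hatanoNelson_GBZ (tl tr : ℝ) (htl : 0 < tl) (htr : 0 < tr)
    (β : ℂ) (hβ : β ≠ 0) :
    ((∃ β' : ℂ,
        (∀ z : ℂ, (tr : ℂ) * z ^ 2 - ((tl : ℂ) * β⁻¹ + (tr : ℂ) * β) * z + (tl : ℂ) =
          (tr : ℂ) * (z - β) * (z - β')) ∧
        ‖β‖ = ‖β'‖) ↔
      ‖β‖ = Real.sqrt (tl / tr)) ∧
    {w : ℂ | w ≠ 0 ∧ ∃ w' : ℂ,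
        (∀ z : ℂ, (tr : ℂ) * z ^ 2 - ((tl : ℂ) * w⁻¹ + (tr : ℂ) * w) * z + (tl : ℂ) =
          (tr : ℂ) * (z - w) * (z - w')) ∧
        ‖w‖ = ‖w'‖} =
      Metric.sphere (0 : ℂ) (Real.sqrt (tl / tr)) := by
  refine ⟨hatanoNelson_key tl tr htl htr β hβ, ?_⟩
  ext w
  simp only [Set.mem_setOf_eq, Metric.mem_sphere, dist_zero_right]
  constructor
  · rintro ⟨hw, hex⟩
    exact (hatanoNelson_key tl tr htl htr w hw).mp hex
  · intro hw
    have hw0 : w ≠ 0 := by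
      intro h
      rw [h] at hw
      simp only [norm_zero] at hw
      have : Real.sqrt (tl / tr) > 0 := Real.sqrt_pos.mpr (by positivity)
      linarith [hw ▸ this]
    exact ⟨hw0, (hatanoNelson_key tl tr htl htr w hw0).mpr hw⟩
end

section
/- Let A, B ∈ ℝ and define g(β) = β⁻¹ + A β + B β² on ℂ∖{0}. There is no nonempty bounded open set U ⊆ ℂ such that 0 ∉ closure(U) and Im(g(z)) = 0 for every z ∈ frontier(U). (This is the paper's argument that any closed loop contained in the preimage g⁻¹(ℝ) must enclose the origin: if the loop bounded a region U avoiding 0, then g would be holomorphic on U with Im(g) vanishing on the boundary, forcing g to be constant on U by the maximum principle for Im(g) and the Cauchy–Riemann equations, contradicting that g is nonconstant.) -/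
open Complex Metric

/-- For the characteristic function `g(β) = β⁻¹ + A β + B β²` with `A, B ∈ ℝ`,
there is no nonempty bounded open set `U ⊆ ℂ` whose closure avoids the origin
and on whose whole boundary `Im g` vanishes. (Hence any closed loop contained
in the preimage `g⁻¹(ℝ)` must enclose the origin.) -/
theorem no_loop_avoiding_origin (A B : ℝ) :
    ¬ ∃ U : Set ℂ, U.Nonempty ∧ Bornology.IsBounded U ∧ IsOpen U ∧
        (0 : ℂ) ∉ closure U ∧
        ∀ z ∈ frontier U, (z⁻¹ + (A : ℂ) * z + (B : ℂ) * z ^ 2).im = 0 := by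
  rintro ⟨U, ⟨z₀, hz₀⟩, hb, ho, h0, hfr⟩
  set g : ℂ → ℂ := fun z => z⁻¹ + (A : ℂ) * z + (B : ℂ) * z ^ 2 with hgdef
  have hcl : ∀ z ∈ closure U, z ≠ 0 := fun z hz h => h0 (h ▸ hz)
  have hdg : DifferentiableOn ℂ g (closure U) := by
    apply DifferentiableOn.add
    apply DifferentiableOn.add
    · exact differentiableOn_id.inv hcl
    · exact (differentiableOn_const _).mul differentiableOn_id
    · exact (differentiableOn_const _).mul (differentiableOn_id.pow 2)
  -- maximum principle: Im g vanishes on U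
  have key : ∀ z ∈ U, (g z).im = 0 := by
    intro z hz
    have hd1 : DiffContOnCl ℂ (fun z => Complex.exp (I * g z)) U :=
      (((differentiableOn_const I).mul hdg).cexp).diffContOnCl
    have hd2 : DiffContOnCl ℂ (fun z => Complex.exp (-I * g z)) U :=
      (((differentiableOn_const (-I)).mul hdg).cexp).diffContOnCl
    have h1 : ‖Complex.exp (I * g z)‖ ≤ 1 := by
      refine norm_le_of_forall_mem_frontier_norm_le hb hd1 (fun w hw => ?_) (subset_closure hz)
      have hre : (I * g w).re = 0 := by
        rw [Complex.mul_re, Complex.I_re, Complex.I_im]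
        simp [hgdef, hfr w hw]
      rw [Complex.norm_exp, hre, Real.exp_zero]
    have h2 : ‖Complex.exp (-I * g z)‖ ≤ 1 := by
      refine norm_le_of_forall_mem_frontier_norm_le hb hd2 (fun w hw => ?_) (subset_closure hz)
      have hre : (-I * g w).re = 0 := by
        rw [Complex.mul_re, Complex.neg_re, Complex.neg_im, Complex.I_re, Complex.I_im]
        simp [hgdef, hfr w hw]
      rw [Complex.norm_exp, hre, Real.exp_zero]
    rw [Complex.norm_exp] at h1 h2
    have e1 : (I * g z).re = -(g z).im := by simp [Complex.mul_re]
    have e2 : (-I * g z).re = (g z).im := by simp [Complex.mul_re]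
    rw [e1] at h1
    rw [e2] at h2
    have k1 := Real.exp_le_exp.mp (h1.trans_eq Real.exp_zero.symm)
    have k2 := Real.exp_le_exp.mp (h2.trans_eq Real.exp_zero.symm)
    linarith
  -- now derive a contradiction from Im g = 0 on an open ball
  obtain ⟨ε, hε, hball⟩ := Metric.isOpen_iff.mp ho z₀ hz₀
  set x₀ : ℝ := z₀.re
  set y₀ : ℝ := z₀.im
  set C : ℝ := A + 2 * B * x₀ with hC
  have heq : ∀ t : ℝ, |t - y₀| < ε → t * (C * (x₀ ^ 2 + t ^ 2) - 1) = 0 := by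
    intro t ht
    set w : ℂ := ⟨x₀, t⟩ with hw
    have hwU : w ∈ U := by
      apply hball
      rw [mem_ball, Complex.dist_eq, Complex.norm_def]
      have hd : w - z₀ = ⟨0, t - y₀⟩ := by
        apply Complex.ext <;> simp [hw, x₀, y₀]
      rw [hd]
      simpa [Complex.normSq_mk, ← sq, Real.sqrt_sq_eq_abs] using ht
    have hw0 : w ≠ 0 := hcl w (subset_closure hwU)
    have hS : 0 < x₀ ^ 2 + t ^ 2 := by
      have h := Complex.normSq_pos.mpr hw0
      rw [hw, Complex.normSq_mk] at h
      nlinarith [h]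
    have hSne : x₀ ^ 2 + t ^ 2 ≠ 0 := ne_of_gt hS
    have him := key w hwU
    have hw2 : (w ^ 2).im = 2 * x₀ * t := by
      rw [sq, Complex.mul_im, hw]; ring
    have hrw : (g w).im = -t / (x₀ ^ 2 + t ^ 2) + A * t + B * (2 * x₀ * t) := by
      simp only [hgdef, Complex.add_im, Complex.mul_im, Complex.ofReal_re, Complex.ofReal_im,
        Complex.inv_im, hw2, zero_mul, add_zero]
      rw [hw]
      simp [Complex.normSq_mk]
      ring_nf
    rw [hrw] at him
    rw [hC]
    field_simp at him
    linear_combination him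
  have main : ∀ t : ℝ, |t - y₀| < ε → t ≠ 0 → C * (x₀ ^ 2 + t ^ 2) = 1 := by
    intro t ht htne
    rcases mul_eq_zero.mp (heq t ht) with h | h
    · exact absurd h htne
    · linarith
  rcases le_or_gt 0 y₀ with hy | hy
  · have ht1 : |y₀ + ε / 2 - y₀| < ε := by rw [_root_.abs_of_nonneg] <;> linarith
    have ht2 : |y₀ + ε / 4 - y₀| < ε := by rw [_root_.abs_of_nonneg] <;> linarith
    have e1 := main _ ht1 (ne_of_gt (by linarith : (0:ℝ) < y₀ + ε / 2))
    have e2 := main _ ht2 (ne_of_gt (by linarith : (0:ℝ) < y₀ + ε / 4))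
    have hCΔ : C * ((y₀ + ε / 2) ^ 2 - (y₀ + ε / 4) ^ 2) = 0 := by linear_combination e1 - e2
    have hΔ : (y₀ + ε / 2) ^ 2 - (y₀ + ε / 4) ^ 2 > 0 := by nlinarith
    have hC0 : C = 0 := by
      rcases mul_eq_zero.mp hCΔ with h | h
      · exact h
      · linarith
    rw [hC0] at e1; simp at e1
  · have ht1 : |y₀ - ε / 2 - y₀| < ε := by rw [_root_.abs_of_nonpos] <;> linarith
    have ht2 : |y₀ - ε / 4 - y₀| < ε := by rw [_root_.abs_of_nonpos] <;> linarith
    have e1 := main _ ht1 (ne_of_lt (by linarith : y₀ - ε / 2 < 0))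
    have e2 := main _ ht2 (ne_of_lt (by linarith : y₀ - ε / 4 < 0))
    have hCΔ : C * ((y₀ - ε / 2) ^ 2 - (y₀ - ε / 4) ^ 2) = 0 := by linear_combination e1 - e2
    have hΔ : (y₀ - ε / 2) ^ 2 - (y₀ - ε / 4) ^ 2 > 0 := by nlinarith
    have hC0 : C = 0 := by
      rcases mul_eq_zero.mp hCΔ with h | h
      · exact h
      · linarith
    rw [hC0] at e1; simp at e1
end

section
/- Let A, B ∈ ℝ with B ≠ 0, and consider the real cubic P(x) = 2Bx³ + Ax² − 1 (whose real roots are the real critical points of g(β) = β⁻¹ + Aβ + Bβ²). Then: (i) P has three distinct real roots if and only if A³ > 27B²; and (ii) P has exactly one real root (its other two roots forming a nonreal complex-conjugate pair) if and only if A³ < 27B². -/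
private lemma exists_root_pos (A B : ℝ) (hB : 0 < B) :
    ∃ r : ℝ, 2*B*r^3 + A*r^2 - 1 = 0 := by
  set T : ℝ := (|A|+1)/B + 1 with hT
  have hq : 0 < (|A|+1)/B := by positivity
  have hT1 : 1 ≤ T := by simp only [hT]; linarith
  have hT2 : (1:ℝ) ≤ T^2 := by nlinarith
  have hBT : B*T = |A| + 1 + B := by rw [hT]; field_simp
  have hA1 : -|A| ≤ A := neg_abs_le A
  have hA2 : A ≤ |A| := le_abs_self A
  have hfT : 0 ≤ 2*B*T^3 + A*T^2 - 1 := by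
    have e : 2*B*T^3 + A*T^2 - 1 = (2*(B*T) + A)*T^2 - 1 := by ring
    rw [e, hBT]; nlinarith
  have hfmT : 2*B*(-T)^3 + A*(-T)^2 - 1 ≤ 0 := by
    have e : 2*B*(-T)^3 + A*(-T)^2 - 1 = (-2*(B*T) + A)*T^2 - 1 := by ring
    rw [e, hBT]; nlinarith
  have hc : Continuous (fun x : ℝ => 2*B*x^3 + A*x^2 - 1) := by continuity
  have := intermediate_value_Icc (by linarith : (-T : ℝ) ≤ T) hc.continuousOn
    (Set.mem_Icc.mpr ⟨hfmT, hfT⟩)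
  obtain ⟨r, _, hr⟩ := this
  exact ⟨r, hr⟩

private lemma exists_root (A B : ℝ) (hB : B ≠ 0) :
    ∃ r : ℝ, 2*B*r^3 + A*r^2 - 1 = 0 := by
  rcases hB.lt_or_gt with h | h
  · obtain ⟨r, hr⟩ := exists_root_pos A (-B) (by linarith)
    exact ⟨-r, by linear_combination hr⟩
  · exact exists_root_pos A B h

private lemma three_roots_pos (A B : ℝ) (hB : 0 < B) (h : 27 * B^2 < A^3) :
    ∃ x₁ x₂ x₃ : ℝ, x₁ < x₂ ∧ x₂ < x₃ ∧
      ∀ x : ℝ, 2*B*x^3 + A*x^2 - 1 = 2*B*(x-x₁)*(x-x₂)*(x-x₃) := by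
  have hA : 0 < A := by nlinarith [sq_nonneg B, sq_nonneg A]
  set f : ℝ → ℝ := fun x => 2*B*x^3 + A*x^2 - 1 with hf
  have hc : Continuous f := by continuity
  set m : ℝ := -(A/(3*B)) with hm
  have hm0 : m < 0 := by have : 0 < A/(3*B) := by positivity
                         simp only [hm]; linarith
  have hfm : 0 < f m := by
    have key : 27*B^2 * f m = A^3 - 27*B^2 := by
      simp only [hf, hm]; field_simp; ring
    nlinarith [sq_nonneg B]
  have hf0 : f 0 = -1 := by simp [hf]
  -- large T
  set T : ℝ := (A+1)/B + 1 with hT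
  have hq : 0 < (A+1)/B := by positivity
  have hT1 : 1 ≤ T := by simp only [hT]; linarith
  have hT2 : (1:ℝ) ≤ T^2 := by nlinarith
  have hBT : B*T = A + 1 + B := by rw [hT]; field_simp
  have hfT : 0 ≤ f T := by
    have e : f T = (2*(B*T) + A)*T^2 - 1 := by simp only [hf]; ring
    rw [e, hBT]; nlinarith
  have hfmT : f (-T) ≤ 0 := by
    have e : f (-T) = (-2*(B*T) + A)*T^2 - 1 := by simp only [hf]; ring
    rw [e, hBT]; nlinarith
  have hmT : -T < m := by
    have h1 : A/(3*B) < T := by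
      rw [div_lt_iff₀ (by positivity : (0:ℝ) < 3*B)]
      nlinarith
    simp only [hm]; linarith
  -- three roots by IVT
  obtain ⟨x₁, hx₁m, hx₁⟩ := intermediate_value_Icc (le_of_lt hmT) hc.continuousOn
    (Set.mem_Icc.mpr ⟨hfmT, le_of_lt hfm⟩)
  obtain ⟨x₂, hx₂m, hx₂⟩ := intermediate_value_Icc' (le_of_lt hm0) hc.continuousOn
    (Set.mem_Icc.mpr ⟨by rw [hf0]; norm_num, le_of_lt hfm⟩)
  obtain ⟨x₃, hx₃m, hx₃⟩ := intermediate_value_Icc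
    (by linarith : (0:ℝ) ≤ T) hc.continuousOn
    (Set.mem_Icc.mpr ⟨by rw [hf0]; norm_num, hfT⟩)
  have h1m : x₁ < m := lt_of_le_of_ne hx₁m.2 (fun e => by rw [e] at hx₁; linarith)
  have h2m : m ≤ x₂ := hx₂m.1
  have h20 : x₂ < 0 := lt_of_le_of_ne hx₂m.2 (fun e => by rw [e, hf0] at hx₂; linarith)
  have h30 : 0 ≤ x₃ := hx₃m.1
  have h12 : x₁ < x₂ := lt_of_lt_of_le h1m h2m
  have h23 : x₂ < x₃ := lt_of_lt_of_le h20 h30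
  refine ⟨x₁, x₂, x₃, h12, h23, ?_⟩
  -- factorization
  have hB' : (2*B) ≠ 0 := by positivity
  set p : ℝ := x₁ + A/(2*B) with hpdef
  have hp : 2*B*p = 2*B*x₁ + A := by rw [hpdef]; field_simp
  have hr1 : 2*B*x₁^3 + A*x₁^2 - 1 = 0 := hx₁
  have hq2 : 2*B*p*x₁^2 = 1 := by linear_combination x₁^2*hp + hr1
  have F : ∀ x : ℝ, 2*B*x^3 + A*x^2 - 1 = 2*B*(x-x₁)*(x^2 + p*x + x₁*p) := by
    intro x; linear_combination (-(x^2))*hp + hq2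
  have hquad : ∀ y : ℝ, x₁ < y → (2*B*y^3 + A*y^2 - 1 = 0) →
      y^2 + p*y + x₁*p = 0 := by
    intro y hy hzero
    have := F y
    rw [hzero] at this
    have hne : 2*B*(y-x₁) ≠ 0 := by
      have : 0 < y - x₁ := by linarith
      positivity
    have hprod : (2*B*(y-x₁)) * (y^2 + p*y + x₁*p) = 0 := by linear_combination -this
    exact (mul_eq_zero.mp hprod).resolve_left hne
  have hquad2 := hquad x₂ h12 hx₂
  have hquad3 := hquad x₃ (lt_trans h12 h23) hx₃
  have h23' : x₂ - x₃ ≠ 0 := sub_ne_zero.mpr (ne_of_lt h23)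
  have hsum : (x₂ - x₃) * (x₂ + x₃ + p) = 0 := by linear_combination hquad2 - hquad3
  have hps : x₂ + x₃ + p = 0 := (mul_eq_zero.mp hsum).resolve_left h23'
  have hq3 : x₁ * p = x₂ * x₃ := by linear_combination hquad2 - x₂*hps
  intro x
  linear_combination (-(x^2))*hp + hq2 + (2*B*(x-x₁)*x)*hps + (2*B*(x-x₁))*hq3

private lemma three_roots (A B : ℝ) (hB : B ≠ 0) (h : 27 * B^2 < A^3) :
    ∃ x₁ x₂ x₃ : ℝ, x₁ < x₂ ∧ x₂ < x₃ ∧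
      ∀ x : ℝ, 2*B*x^3 + A*x^2 - 1 = 2*B*(x-x₁)*(x-x₂)*(x-x₃) := by
  rcases hB.lt_or_gt with hneg | hpos
  · obtain ⟨y₁, y₂, y₃, h12, h23, hfac⟩ :=
      three_roots_pos A (-B) (by linarith) (by nlinarith)
    exact ⟨-y₃, -y₂, -y₁, by linarith, by linarith,
      fun x => by linear_combination hfac (-x)⟩
  · exact three_roots_pos A B hpos h

/-- For `A, B ∈ ℝ`, `B ≠ 0`, the cubic `P(x) = 2Bx³ + Ax² − 1` (whose real
roots are the real critical points of `g(β) = β⁻¹ + Aβ + Bβ²`) has: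
(i) three distinct real roots iff `A³ > 27B²`; and
(ii) exactly one real root, the other two forming a nonreal complex-conjugate
pair, iff `A³ < 27B²`. -/
theorem critical_cubic_roots (A B : ℝ) (hB : B ≠ 0) :
    ((∃ x₁ x₂ x₃ : ℝ, x₁ < x₂ ∧ x₂ < x₃ ∧
        ∀ x : ℝ, 2 * B * x ^ 3 + A * x ^ 2 - 1 =
          2 * B * (x - x₁) * (x - x₂) * (x - x₃)) ↔ A ^ 3 > 27 * B ^ 2) ∧
    ((∃ r : ℝ, ∃ w : ℂ, w.im ≠ 0 ∧
        ∀ z : ℂ, 2 * (B : ℂ) * z ^ 3 + (A : ℂ) * z ^ 2 - 1 =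
          2 * (B : ℂ) * (z - (r : ℂ)) * (z - w) * (z - (starRingEnd ℂ) w)) ↔
      A ^ 3 < 27 * B ^ 2) := by
  constructor
  · constructor
    · rintro ⟨x₁, x₂, x₃, h12, h23, hfac⟩
      have h0 := hfac 0
      have h1 := hfac 1
      have hm := hfac (-1)
      have heA : A + 2*B*(x₁+x₂+x₃) = 0 := by linear_combination h1/2 + hm/2 - h0
      have he2 : 2*B*(x₁*x₂ + x₁*x₃ + x₂*x₃) = 0 := by linear_combination hm/2 - h1/2
      have he3 : 2*B*(x₁*x₂*x₃) = 1 := by linear_combination h0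
      have key : A^3 - 27*B^2 = 4*B^4*((x₁-x₂)*(x₂-x₃)*(x₁-x₃))^2 := by
        linear_combination
          (A^2 - 2*A*B*(x₁+x₂+x₃) + 4*B^2*(x₁+x₂+x₃)^2) * heA
          + (-2*B^3*((x₁+x₂+x₃)^2*(x₁*x₂+x₁*x₃+x₂*x₃)
              - 4*(x₁*x₂+x₁*x₃+x₂*x₃)^2
              + 18*(x₁+x₂+x₃)*(x₁*x₂*x₃))) * he2
          + (8*B^3*(x₁+x₂+x₃)^3 + 27*B^2*(2*B*(x₁*x₂*x₃)+1)) * he3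
      have a1 : x₁ - x₂ ≠ 0 := sub_ne_zero.mpr (ne_of_lt h12)
      have a2 : x₂ - x₃ ≠ 0 := sub_ne_zero.mpr (ne_of_lt h23)
      have a3 : x₁ - x₃ ≠ 0 := sub_ne_zero.mpr (ne_of_lt (lt_trans h12 h23))
      have hM : (x₁-x₂)*(x₂-x₃)*(x₁-x₃) ≠ 0 := mul_ne_zero (mul_ne_zero a1 a2) a3
      have hpos : 0 < 4*B^4*((x₁-x₂)*(x₂-x₃)*(x₁-x₃))^2 := by positivity
      linarith
    · intro h
      exact three_roots A B hB h
  · constructor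
    · rintro ⟨r, w, hw, hfac⟩
      have h0 := hfac 0
      have h1 := hfac 1
      have hm := hfac (-1)
      have E1 : (A:ℂ) + 2*(B:ℂ)*((r:ℂ) + (w + (starRingEnd ℂ) w)) = 0 := by
        linear_combination h1/2 + hm/2 - h0
      have E2 : 2*(B:ℂ)*((r:ℂ)*(w + (starRingEnd ℂ) w) + w*(starRingEnd ℂ) w) = 0 := by
        linear_combination hm/2 - h1/2
      have E3 : 2*(B:ℂ)*((r:ℂ)*(w*(starRingEnd ℂ) w)) = 1 := by
        linear_combination h0
      rw [Complex.add_conj] at E1 E2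
      rw [Complex.mul_conj] at E2 E3
      have e1r : A + 2*B*(r + 2*w.re) = 0 := by exact_mod_cast E1
      have e2r : 2*B*(r*(2*w.re) + Complex.normSq w) = 0 := by exact_mod_cast E2
      have e3r : 2*B*(r*(Complex.normSq w)) = 1 := by exact_mod_cast E3
      rw [Complex.normSq_apply] at e2r e3r
      have key : A^3 - 27*B^2 = -(16*B^4*w.im^2*((r-w.re)^2+w.im^2)^2) := by
        linear_combination
          (A^2 - 2*A*B*(r+2*w.re) + 4*B^2*(r+2*w.re)^2) * e1r
          + (-2*B^3*((r+2*w.re)^2*(2*r*w.re + w.re^2 + w.im^2)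
              - 4*(2*r*w.re + w.re^2 + w.im^2)^2
              + 18*(r+2*w.re)*(r*(w.re^2+w.im^2)))) * e2r
          + (8*B^3*(r+2*w.re)^3 + 27*B^2*(2*B*(r*(w.re^2+w.im^2))+1)) * e3r
      have hpos : 0 < 16*B^4*w.im^2*((r-w.re)^2+w.im^2)^2 := by positivity
      linarith
    · intro h
      obtain ⟨r, hr⟩ := exists_root A B hB
      set p : ℝ := r + A/(2*B) with hpdef
      have hp : 2*B*p = 2*B*r + A := by rw [hpdef]; field_simp
      clear_value p
      have hq2 : 2*B*p*r^2 = 1 := by linear_combination r^2*hp + hr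
      have key : A^3 - 27*B^2 = (p^2 - 4*(r*p)) * (2*B^2*r*(r+2*p))^2 := by
        linear_combination (-(A^2 + 2*A*B*(p-r) + 4*B^2*(p-r)^2)) * hp
          + (-8*B^3*(p-r)^3 + 27*B^2*(2*B*p*r^2+1)) * hq2
      have hD : p^2 - 4*(r*p) < 0 := by
        by_contra hcon
        push_neg at hcon
        have h2 : 0 ≤ (p^2 - 4*(r*p)) * (2*B^2*r*(r+2*p))^2 :=
          mul_nonneg hcon (sq_nonneg _)
        linarith
      have hrp : 0 < r*p - p^2/4 := by linarith
      set s : ℝ := Real.sqrt (r*p - p^2/4) with hsdef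
      have hs2 : s^2 = r*p - p^2/4 := by rw [hsdef]; exact Real.sq_sqrt hrp.le
      have hspos : 0 < s := by rw [hsdef]; exact Real.sqrt_pos.mpr hrp
      clear_value s
      refine ⟨r, (↑(-(p/2)) + ↑s * Complex.I), ?_, ?_⟩
      · simpa using ne_of_gt hspos
      · intro z
        have hconj : (starRingEnd ℂ) ((↑(-(p/2)) : ℂ) + ↑s * Complex.I)
            = (↑(-(p/2)) : ℂ) - ↑s * Complex.I := by
          rw [map_add, map_mul, Complex.conj_ofReal, Complex.conj_ofReal,
            Complex.conj_I]
          ring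
        rw [hconj]
        have hp_c : 2*(B:ℂ)*(p:ℂ) = 2*(B:ℂ)*(r:ℂ) + (A:ℂ) := by exact_mod_cast hp
        have hq2_c : 2*(B:ℂ)*(p:ℂ)*(r:ℂ)^2 = 1 := by exact_mod_cast hq2
        have hs2_c : (s:ℂ)^2 = (r:ℂ)*(p:ℂ) - (p:ℂ)^2/4 := by exact_mod_cast hs2
        push_cast
        linear_combination (-(z^2))*hp_c + hq2_c
          + (-(2*(B:ℂ)*(z - (r:ℂ))))*hs2_c
          + (2*(B:ℂ)*(z-(r:ℂ))*(s:ℂ)^2)*Complex.I_sq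
end

section
/- Let A, B ∈ ℝ with B > 0 and A³ > 27B², and let x₁ < x₂ < x₃ be the three real roots of 2Bx³ + Ax² − 1 = 0 (with x₂ < 0 < x₃). For every real E with g(x₂) < E < g(x₃), the cubic Q_E(z) = Bz³ + Az² − Ez + 1 has exactly one real root r and a pair of nonreal complex-conjugate roots w and w̄, and these satisfy |w| = |w̄| < |r|. In particular the two smallest-modulus roots of Q_E have equal modulus, so every such E satisfies the GBZ condition and belongs to the OBC spectrum. -/
set_option maxHeartbeats 1000000

/-- Let `B > 0`, `A³ > 27B²`, and let `x₁ < x₂ < x₃` (with `x₂ < 0 < x₃`) be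
the three real roots of `2Bx³ + Ax² − 1 = 0`. For every real `E` with
`g(x₂) < E < g(x₃)` (where `g(x) = 1/x + Ax + Bx²`), the cubic
`Q_E(z) = Bz³ + Az² − Ez + 1` has exactly one real root `r` and a pair of
nonreal complex-conjugate roots `w, w̄`, and `|w| = |w̄| < |r|`: the two
smallest-modulus roots have equal modulus, so `E` satisfies the GBZ condition. -/
theorem gbz_condition_between_critical_values (A B : ℝ) (hB : 0 < B)
    (h : A ^ 3 > 27 * B ^ 2)
    (x₁ x₂ x₃ : ℝ) (h12 : x₁ < x₂) (h23 : x₂ < x₃) (hx2 : x₂ < 0) (hx3 : 0 < x₃)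
    (hroots : ∀ x : ℝ, 2 * B * x ^ 3 + A * x ^ 2 - 1 = 0 ↔ (x = x₁ ∨ x = x₂ ∨ x = x₃))
    (E : ℝ) (hE1 : 1 / x₂ + A * x₂ + B * x₂ ^ 2 < E)
    (hE2 : E < 1 / x₃ + A * x₃ + B * x₃ ^ 2) :
    ∃ r : ℝ, ∃ w : ℂ, w.im ≠ 0 ∧
      (∀ z : ℂ, (B : ℂ) * z ^ 3 + (A : ℂ) * z ^ 2 - (E : ℂ) * z + 1 =
        (B : ℂ) * (z - (r : ℂ)) * (z - w) * (z - (starRingEnd ℂ) w)) ∧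
      ‖w‖ = ‖(starRingEnd ℂ) w‖ ∧
      ‖w‖ < |r| := by
  have hx2ne : x₂ ≠ 0 := ne_of_lt hx2
  have hx3ne : x₃ ≠ 0 := ne_of_gt hx3
  have hBne : B ≠ 0 := ne_of_gt hB
  have eq1 : 2 * B * x₁ ^ 3 + A * x₁ ^ 2 - 1 = 0 := (hroots x₁).mpr (Or.inl rfl)
  have eq2 : 2 * B * x₂ ^ 3 + A * x₂ ^ 2 - 1 = 0 := (hroots x₂).mpr (Or.inr (Or.inl rfl))
  have eq3 : 2 * B * x₃ ^ 3 + A * x₃ ^ 2 - 1 = 0 := (hroots x₃).mpr (Or.inr (Or.inr rfl))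
  have hA : 0 < A := by nlinarith [sq_nonneg B, mul_pos hB hB, sq_nonneg A]
  -- key bound on x₂
  have hax : A * x₂ ^ 2 < 3 := by
    by_contra hc
    push_neg at hc
    have hdiv0 : (x₁ - x₂) * (2 * B * (x₁ ^ 2 + x₁ * x₂ + x₂ ^ 2) + A * (x₁ + x₂)) = 0 := by
      linear_combination eq1 - eq2
    have hdiv : 2 * B * (x₁ ^ 2 + x₁ * x₂ + x₂ ^ 2) + A * (x₁ + x₂) = 0 := by
      rcases mul_eq_zero.mp hdiv0 with hz | hz
      · exact absurd hz (sub_ne_zero.mpr (ne_of_lt h12))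
      · exact hz
    rcases le_or_gt A (3 * B * (-x₂)) with hca | hca
    · have h1 : 0 < x₂ - x₁ := by linarith
      have h2 : 0 < -(2 * x₁ + x₂) := by linarith
      nlinarith [mul_pos hB (mul_pos h1 h2),
        mul_nonneg (by linarith : (0:ℝ) ≤ 3 * B * (-x₂) - A) (by linarith : (0:ℝ) ≤ -(x₁ + x₂))]
    · nlinarith [mul_pos (sub_pos.mpr hca) (pow_pos (neg_pos.mpr hx2) 2)]
  have hc3 : x₂ ^ 3 < 0 := Odd.pow_neg (by decide) hx2
  have hBx3 : B * x₂ ^ 3 < 0 := mul_neg_of_pos_of_neg hB hc3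
  have hBx3' : -1 < B * x₂ ^ 3 := by linarith
  have key2 : B ^ 2 * x₂ ^ 6 < 1 := by
    nlinarith [mul_pos (by linarith : (0:ℝ) < B * x₂ ^ 3 + 1) (by linarith : (0:ℝ) < -(B * x₂ ^ 3))]
  -- auxiliary points
  obtain ⟨s₂, hs₂⟩ : ∃ s : ℝ, s = -1 / (B * x₂ ^ 2) := ⟨_, rfl⟩
  obtain ⟨s₃, hs₃⟩ : ∃ s : ℝ, s = -1 / (B * x₃ ^ 2) := ⟨_, rfl⟩
  have hs₂neg : s₂ < 0 := by
    rw [hs₂]; exact div_neg_of_neg_of_pos (by norm_num) (by positivity)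
  have hs₃neg : s₃ < 0 := by
    rw [hs₃]; exact div_neg_of_neg_of_pos (by norm_num) (by positivity)
  have idI : ∀ x : ℝ, B * x ^ 3 + A * x ^ 2 - E * x + 1
      = B * (x - x₂) ^ 2 * (x - s₂) + ((1 / x₂ + A * x₂ + B * x₂ ^ 2) - E) * x := by
    intro x
    rw [hs₂]
    field_simp
    linear_combination (x ^ 2 - x * x₂) * eq2
  have idIII : ∀ x : ℝ, B * x ^ 3 + A * x ^ 2 - E * x + 1
      = B * (x - x₃) ^ 2 * (x - s₃) + ((1 / x₃ + A * x₃ + B * x₃ ^ 2) - E) * x := by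
    intro x
    rw [hs₃]
    field_simp
    linear_combination (x ^ 2 - x * x₃) * eq3
  have hQpos : ∀ x : ℝ, 0 < x → 0 < B * x ^ 3 + A * x ^ 2 - E * x + 1 := by
    intro x hx
    rw [idIII x]
    nlinarith [mul_nonneg (mul_nonneg hB.le (sq_nonneg (x - x₃))) (by linarith : (0:ℝ) ≤ x - s₃),
      mul_pos (by linarith : (0:ℝ) < 1 / x₃ + A * x₃ + B * x₃ ^ 2 - E) hx]
  have hQneg : ∀ x : ℝ, x < 0 → B * x ^ 3 + A * x ^ 2 - E * x + 1 = 0 → x < s₂ := by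
    intro x hx hQ
    by_contra hge
    push_neg at hge
    rw [idI x] at hQ
    nlinarith [mul_nonneg (mul_nonneg hB.le (sq_nonneg (x - x₂))) (by linarith : (0:ℝ) ≤ x - s₂),
      mul_pos (by linarith : (0:ℝ) < E - (1 / x₂ + A * x₂ + B * x₂ ^ 2)) (by linarith : (0:ℝ) < -x)]
  -- find the real root by IVT
  obtain ⟨C, hC⟩ : ∃ c : ℝ, c = (|A| + |E| + 2) / B + 1 := ⟨_, rfl⟩
  have hC1 : (1:ℝ) ≤ C := by rw [hC]; exact le_add_of_nonneg_left (by positivity)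
  have hBC : B * C = |A| + |E| + 2 + B := by
    rw [hC]; field_simp
  have hBC3 : B * C ^ 3 = (|A| + |E| + 2 + B) * C ^ 2 := by
    calc B * C ^ 3 = (B * C) * C ^ 2 := by ring
    _ = (|A| + |E| + 2 + B) * C ^ 2 := by rw [hBC]
  have hQC : B * (-C) ^ 3 + A * (-C) ^ 2 - E * (-C) + 1 < 0 := by
    have h1 : C ≤ C ^ 2 := by nlinarith
    have h2 : (1:ℝ) ≤ C ^ 2 := by nlinarith
    have h3 : A * C ^ 2 ≤ |A| * C ^ 2 :=
      mul_le_mul_of_nonneg_right (le_abs_self A) (sq_nonneg C)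
    have h4 : E * C ≤ |E| * C := mul_le_mul_of_nonneg_right (le_abs_self E) (by linarith)
    have h5 : |E| * C ≤ |E| * C ^ 2 := mul_le_mul_of_nonneg_left h1 (abs_nonneg E)
    have h6 : 0 ≤ B * C ^ 2 := by positivity
    nlinarith
  obtain ⟨r, hrmem, hrQ⟩ := intermediate_value_Icc (by linarith : -C ≤ (0:ℝ))
    ((by fun_prop : Continuous fun x : ℝ => B * x ^ 3 + A * x ^ 2 - E * x + 1).continuousOn)
    (Set.mem_Icc.mpr ⟨hQC.le, by norm_num⟩)
  have hr0 : r < 0 := by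
    rcases lt_or_eq_of_le hrmem.2 with hlt | heq
    · exact hlt
    · exfalso; rw [heq] at hrQ; norm_num at hrQ
  have hrne : r ≠ 0 := ne_of_lt hr0
  have hrs : r < s₂ := hQneg r hr0 hrQ
  have key_r : B * r ^ 3 < -1 := by
    have hq2 : 0 < s₂ ^ 2 + s₂ * r + r ^ 2 := by
      nlinarith [sq_nonneg (s₂ + r), pow_pos (neg_pos.mpr hs₂neg) 2]
    have h1 : r ^ 3 < s₂ ^ 3 := by nlinarith [mul_pos (sub_pos.mpr hrs) hq2]
    have h2 : B * s₂ ^ 3 = -1 / (B ^ 2 * x₂ ^ 6) := by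
      rw [hs₂]; field_simp
    have hp6 : (0:ℝ) < B ^ 2 * x₂ ^ 6 := by positivity
    have h3 : B * s₂ ^ 3 < -1 := by
      rw [h2, div_lt_iff₀ hp6]; nlinarith
    nlinarith [mul_lt_mul_of_pos_left h1 hB]
  -- quadratic cofactor
  obtain ⟨p, hp⟩ : ∃ p : ℝ, p = A / B + r := ⟨_, rfl⟩
  obtain ⟨q, hq⟩ : ∃ q : ℝ, q = -1 / (B * r) := ⟨_, rfl⟩
  have hrQ' : B * r ^ 3 + A * r ^ 2 - E * r + 1 = 0 := hrQ
  have hBr : B * r < 0 := mul_neg_of_pos_of_neg hB hr0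
  have hq0 : 0 < q := by
    rw [hq]; exact div_pos_of_neg_of_neg (by norm_num) hBr
  have hqmul : q * (B * r) = -1 := by rw [hq]; field_simp
  have idII : ∀ x : ℝ, B * x ^ 3 + A * x ^ 2 - E * x + 1 = B * (x - r) * (x ^ 2 + p * x + q) := by
    intro x
    rw [hp, hq]
    field_simp
    linear_combination x * hrQ'
  have hx22 : (0:ℝ) < x₂ ^ 2 := by positivity
  have hBs₂ : B * s₂ = -1 / x₂ ^ 2 := by rw [hs₂]; field_simp
  have hBrpos : (0:ℝ) < -(B * r) := by linarith
  have hqmul' : q * (-(B * r)) = 1 := by linear_combination -hqmul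
  have hqr2 : q < r ^ 2 := by
    have h4 : q * (-(B * r)) < r ^ 2 * (-(B * r)) := by
      have h2 : r ^ 2 * (-(B * r)) = -(B * r ^ 3) := by ring
      rw [hqmul', h2]; linarith
    exact lt_of_mul_lt_mul_right h4 (le_of_lt hBrpos)
  -- the discriminant is negative
  have hD : p ^ 2 - 4 * q < 0 := by
    by_contra hDc
    push_neg at hDc
    obtain ⟨d, hd⟩ : ∃ d : ℝ, d = Real.sqrt (p ^ 2 - 4 * q) := ⟨_, rfl⟩
    have hd2 : d ^ 2 = p ^ 2 - 4 * q := by rw [hd]; exact Real.sq_sqrt (by linarith)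
    obtain ⟨v₁, hv₁⟩ : ∃ v : ℝ, v = (-p - d) / 2 := ⟨_, rfl⟩
    obtain ⟨v₂, hv₂⟩ : ∃ v : ℝ, v = (-p + d) / 2 := ⟨_, rfl⟩
    have hv₁z : v₁ ^ 2 + p * v₁ + q = 0 := by rw [hv₁]; linear_combination hd2 / 4
    have hv₂z : v₂ ^ 2 + p * v₂ + q = 0 := by rw [hv₂]; linear_combination hd2 / 4
    have hv₁Q : B * v₁ ^ 3 + A * v₁ ^ 2 - E * v₁ + 1 = 0 := by
      rw [idII v₁, hv₁z, mul_zero]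
    have hv₂Q : B * v₂ ^ 3 + A * v₂ ^ 2 - E * v₂ + 1 = 0 := by
      rw [idII v₂, hv₂z, mul_zero]
    have hv₁0 : v₁ < 0 := by
      rcases lt_trichotomy v₁ 0 with h' | h' | h'
      · exact h'
      · exfalso; rw [h'] at hv₁Q; norm_num at hv₁Q
      · exact absurd hv₁Q (ne_of_gt (hQpos v₁ h'))
    have hv₂0 : v₂ < 0 := by
      rcases lt_trichotomy v₂ 0 with h' | h' | h'
      · exact h'
      · exfalso; rw [h'] at hv₂Q; norm_num at hv₂Q
      · exact absurd hv₂Q (ne_of_gt (hQpos v₂ h'))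
    have hv₁s : v₁ < s₂ := hQneg v₁ hv₁0 hv₁Q
    have hv₂s : v₂ < s₂ := hQneg v₂ hv₂0 hv₂Q
    have hprod : v₁ * v₂ = q := by rw [hv₁, hv₂]; linear_combination -hd2 / 4
    -- q < x₂²
    have hBrs : B * r < -1 / x₂ ^ 2 := by
      have := mul_lt_mul_of_pos_left hrs hB
      rw [hBs₂] at this; linarith
    have h2' : 1 / x₂ ^ 2 < -(B * r) := by
      have hna : -1 / x₂ ^ 2 = -(1 / x₂ ^ 2) := by ring
      rw [hna] at hBrs; linarith
    have h4 : x₂ ^ 2 * (1 / x₂ ^ 2) = 1 := by field_simp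
    have hqlt : q < x₂ ^ 2 := by
      have h3 : x₂ ^ 2 * (1 / x₂ ^ 2) < x₂ ^ 2 * (-(B * r)) := mul_lt_mul_of_pos_left h2' hx22
      have h5 : q * (-(B * r)) < x₂ ^ 2 * (-(B * r)) := by rw [hqmul']; linarith
      exact lt_of_mul_lt_mul_right h5 (le_of_lt hBrpos)
    -- s₂² < q
    have hqgt : s₂ ^ 2 < q := by
      have a1 : (0:ℝ) < s₂ - v₁ := by linarith
      have a2 : (0:ℝ) < s₂ - v₂ := by linarith
      have a3 : (0:ℝ) < -s₂ := by linarith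
      have hid : q - s₂ ^ 2 = (s₂ - v₁) * (s₂ - v₂) + (-s₂) * (s₂ - v₁) + (-s₂) * (s₂ - v₂) := by
        linear_combination -hprod
      linarith [mul_pos a1 a2, mul_pos a3 a1, mul_pos a3 a2]
    -- x₂² < s₂²
    have hs2x2 : x₂ ^ 2 < s₂ ^ 2 := by
      have hb4 : (0:ℝ) < B ^ 2 * x₂ ^ 4 := by positivity
      have hss : s₂ ^ 2 * (B ^ 2 * x₂ ^ 4) = 1 := by rw [hs₂]; field_simp
      have h5 : x₂ ^ 2 * (B ^ 2 * x₂ ^ 4) = B ^ 2 * x₂ ^ 6 := by ring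
      have h6 : x₂ ^ 2 * (B ^ 2 * x₂ ^ 4) < s₂ ^ 2 * (B ^ 2 * x₂ ^ 4) := by
        rw [hss, h5]; linarith
      exact lt_of_mul_lt_mul_right h6 (le_of_lt hb4)
    linarith
  -- construct the complex root
  obtain ⟨d, hd⟩ : ∃ d : ℝ, d = Real.sqrt (4 * q - p ^ 2) := ⟨_, rfl⟩
  have hd2 : d ^ 2 = 4 * q - p ^ 2 := by rw [hd]; exact Real.sq_sqrt (by linarith)
  have hdpos : 0 < d := by rw [hd]; exact Real.sqrt_pos.mpr (by linarith)
  have hnormsq : Complex.normSq ⟨-p / 2, d / 2⟩ = q := by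
    rw [Complex.normSq_mk]; linear_combination hd2 / 4
  refine ⟨r, ⟨-p / 2, d / 2⟩, ?_, ?_, ?_, ?_⟩
  · show d / 2 ≠ 0
    positivity
  · -- the factorization
    intro z
    have hrC : (r:ℂ) ≠ 0 := Complex.ofReal_ne_zero.mpr hrne
    have hBC' : (B:ℂ) ≠ 0 := Complex.ofReal_ne_zero.mpr hBne
    have hrQC : (B:ℂ) * (r:ℂ) ^ 3 + (A:ℂ) * (r:ℂ) ^ 2 - (E:ℂ) * (r:ℂ) + 1 = 0 := by
      exact_mod_cast congrArg (Complex.ofReal) hrQ'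
    have hIIC : (B:ℂ) * z ^ 3 + (A:ℂ) * z ^ 2 - (E:ℂ) * z + 1
        = (B:ℂ) * (z - (r:ℂ)) * (z ^ 2 + (p:ℝ) * z + (q:ℝ)) := by
      rw [hp, hq]
      push_cast
      field_simp
      linear_combination z * hrQC
    have hwsum : (⟨-p / 2, d / 2⟩ : ℂ) + (starRingEnd ℂ) ⟨-p / 2, d / 2⟩ = ((-p : ℝ) : ℂ) := by
      rw [Complex.add_conj]
      push_cast
      norm_num
      ring
    have hwprod : (⟨-p / 2, d / 2⟩ : ℂ) * (starRingEnd ℂ) ⟨-p / 2, d / 2⟩ = ((q : ℝ) : ℂ) := by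
      rw [Complex.mul_conj, hnormsq]
    have hquad : (z - (⟨-p / 2, d / 2⟩ : ℂ)) * (z - (starRingEnd ℂ) ⟨-p / 2, d / 2⟩)
        = z ^ 2 + (p:ℝ) * z + (q:ℝ) := by
      have : ((-p : ℝ) : ℂ) = -((p:ℝ) : ℂ) := by push_cast; ring
      linear_combination (-z) * hwsum + hwprod + (-z) * this
    rw [hIIC]
    linear_combination (-(B:ℂ) * (z - (r:ℂ))) * hquad
  · exact (Complex.norm_conj _).symm
  · have h1 : (‖(⟨-p / 2, d / 2⟩ : ℂ)‖) ^ 2 = q := by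
      rw [Complex.sq_norm]; exact hnormsq
    have h2 : (‖(⟨-p / 2, d / 2⟩ : ℂ)‖) ^ 2 < |r| ^ 2 := by
      rw [h1, sq_abs]; linarith
    exact lt_of_pow_lt_pow_left₀ 2 (abs_nonneg r) h2
end

section
/- Let A, B ∈ ℝ with B > 0 and A³ > 27B², and let x₁ < x₂ < x₃ be the three real roots of 2Bx³ + Ax² − 1 = 0. For every real E with g(x₁) < E < g(x₂), and also for every real E with E > g(x₃), all three roots of the cubic Q_E(z) = Bz³ + Az² − Ez + 1 are real. -/
/-- A cubic with positive leading coefficient is eventually positive. -/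
lemma cubic_large (b c d e : ℝ) (hb : 0 < b) (x₀ : ℝ) :
    ∃ x : ℝ, x₀ < x ∧ 0 < b * x ^ 3 + c * x ^ 2 + d * x + e := by
  set K : ℝ := (|c| + |d| + |e| + 1) / b with hK
  refine ⟨max (x₀ + 1) (max 1 K), lt_of_lt_of_le (by linarith) (le_max_left _ _), ?_⟩
  set x : ℝ := max (x₀ + 1) (max 1 K) with hx
  have hx1 : (1 : ℝ) ≤ x := le_trans (le_max_left _ _) (le_max_right _ _)
  have hxK : K ≤ x := le_trans (le_max_right _ _) (le_max_right _ _)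
  have hbx : |c| + |d| + |e| + 1 ≤ b * x := by
    rw [hK, div_le_iff₀ hb] at hxK; linarith [hxK]
  have hsq : (0:ℝ) ≤ x ^ 2 := sq_nonneg x
  have h1 : (|c| + |d| + |e| + 1) * x ^ 2 ≤ b * x ^ 3 := by
    calc (|c| + |d| + |e| + 1) * x ^ 2 ≤ (b * x) * x ^ 2 :=
          mul_le_mul_of_nonneg_right hbx hsq
      _ = b * x ^ 3 := by ring
  have h2 : -|c| * x ^ 2 ≤ c * x ^ 2 :=
    mul_le_mul_of_nonneg_right (neg_abs_le c) hsq
  have hxx2 : x ≤ x ^ 2 := by nlinarith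
  have h3 : -(|d| * x ^ 2) ≤ d * x := by
    have : -|d| * x ≤ d * x := mul_le_mul_of_nonneg_right (neg_abs_le d) (by linarith)
    nlinarith [abs_nonneg d]
  have h4 : -(|e| * x ^ 2) ≤ e := by
    have h1' : -|e| ≤ e := neg_abs_le e
    nlinarith [abs_nonneg e]
  nlinarith [h1, h2, h3, h4, hx1]

lemma cubic_small (b c d e : ℝ) (hb : 0 < b) (x₀ : ℝ) :
    ∃ x : ℝ, x < x₀ ∧ b * x ^ 3 + c * x ^ 2 + d * x + e < 0 := by
  obtain ⟨y, hy, hpos⟩ := cubic_large b (-c) d (-e) hb (-x₀)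
  exact ⟨-y, by linarith, by nlinarith⟩

/-- Let `B > 0`, `A³ > 27B²`, and let `x₁ < x₂ < x₃` be the three real roots of
`2Bx³ + Ax² − 1 = 0`. For every real `E` with `g(x₁) < E < g(x₂)`, and also for
every real `E > g(x₃)` (where `g(x) = 1/x + Ax + Bx²`), all three roots of the
cubic `Q_E(z) = Bz³ + Az² − Ez + 1` are real. -/
theorem all_roots_real_outside (A B : ℝ) (hB : 0 < B)
    (h : A ^ 3 > 27 * B ^ 2)
    (x₁ x₂ x₃ : ℝ) (h12 : x₁ < x₂) (h23 : x₂ < x₃)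
    (hroots : ∀ x : ℝ, 2 * B * x ^ 3 + A * x ^ 2 - 1 = 0 ↔ (x = x₁ ∨ x = x₂ ∨ x = x₃))
    (E : ℝ)
    (hE : (1 / x₁ + A * x₁ + B * x₁ ^ 2 < E ∧ E < 1 / x₂ + A * x₂ + B * x₂ ^ 2) ∨
      1 / x₃ + A * x₃ + B * x₃ ^ 2 < E) :
    ∃ r₁ r₂ r₃ : ℝ, ∀ z : ℂ,
      (B : ℂ) * z ^ 3 + (A : ℂ) * z ^ 2 - (E : ℂ) * z + 1 =
        (B : ℂ) * (z - (r₁ : ℂ)) * (z - (r₂ : ℂ)) * (z - (r₃ : ℂ)) := by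
  have hA : 0 < A := by
    by_contra h'
    push_neg at h'
    nlinarith [sq_nonneg A, mul_nonneg (neg_nonneg.2 h') (sq_nonneg A), sq_nonneg B]
  -- the three roots are nonzero
  have hne : ∀ x : ℝ, (x = x₁ ∨ x = x₂ ∨ x = x₃) → x ≠ 0 := by
    intro x hx hx0
    have := (hroots x).mpr hx
    rw [hx0] at this; norm_num at this
  have h1eq : 2 * B * x₁ ^ 3 + A * x₁ ^ 2 - 1 = 0 := (hroots x₁).mpr (Or.inl rfl)
  have h2eq : 2 * B * x₂ ^ 3 + A * x₂ ^ 2 - 1 = 0 := (hroots x₂).mpr (Or.inr (Or.inl rfl))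
  have h3eq : 2 * B * x₃ ^ 3 + A * x₃ ^ 2 - 1 = 0 := (hroots x₃).mpr (Or.inr (Or.inr rfl))
  -- x₂ < 0
  have hx2neg : x₂ < 0 := by
    rcases lt_or_ge x₂ 0 with h' | h'
    · exact h'
    have hx2pos : 0 < x₂ := lt_of_le_of_ne h' (Ne.symm (hne x₂ (Or.inr (Or.inl rfl))))
    have hx3pos : 0 < x₃ := lt_trans hx2pos h23
    have hp3 : x₂ ^ 3 < x₃ ^ 3 := pow_lt_pow_left₀ h23 hx2pos.le (by norm_num)
    have hp2 : x₂ ^ 2 < x₃ ^ 2 := pow_lt_pow_left₀ h23 hx2pos.le (by norm_num)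
    nlinarith [mul_pos hB (sub_pos.2 hp3), mul_pos hA (sub_pos.2 hp2)]
  have hx1neg : x₁ < 0 := lt_trans h12 hx2neg
  -- x₃ > 0
  have hx3pos : 0 < x₃ := by
    obtain ⟨N, hN0, hfN⟩ := cubic_large (2 * B) A 0 (-1) (by linarith) 0
    have hcont : ContinuousOn (fun x : ℝ => 2 * B * x ^ 3 + A * x ^ 2 + 0 * x + (-1))
        (Set.Icc 0 N) := by fun_prop
    have hmem : (0 : ℝ) ∈ Set.Ioo (2 * B * 0 ^ 3 + A * 0 ^ 2 + 0 * 0 + (-1))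
        (2 * B * N ^ 3 + A * N ^ 2 + 0 * N + (-1)) := by
      constructor <;> norm_num
      linarith
    obtain ⟨x, hxmem, hx⟩ := intermediate_value_Ioo (le_of_lt hN0) hcont hmem
    change 2 * B * x ^ 3 + A * x ^ 2 + 0 * x + (-1) = 0 at hx
    have hx' : 2 * B * x ^ 3 + A * x ^ 2 - 1 = 0 := by linarith
    have := (hroots x).mp hx'
    rcases this with rfl | rfl | rfl
    · exact absurd hxmem.1 (by linarith)
    · exact absurd hxmem.1 (by linarith)
    · exact hxmem.1
  set q : ℝ → ℝ := fun x => B * x ^ 3 + A * x ^ 2 - E * x + 1 with hq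
  have hqcont : ∀ u v : ℝ, ContinuousOn q (Set.Icc u v) := by
    intro u v; fun_prop
  -- sign points
  obtain ⟨a, b, c, d, hab, hbc, hcd, hqa, hqb, hqc, hqd⟩ :
      ∃ a b c d : ℝ, a < b ∧ b < c ∧ c < d ∧ q a < 0 ∧ 0 < q b ∧ q c < 0 ∧ 0 < q d := by
    rcases hE with ⟨hE1, hE2⟩ | hE3
    · -- a < x₁ with q a < 0 ; q x₁ > 0 ; q x₂ < 0 ; q 0 = 1 > 0
      obtain ⟨a, ha, hqa⟩ := cubic_small B A (-E) 1 hB x₁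
      refine ⟨a, x₁, x₂, 0, ha, h12, hx2neg, by simp only [hq]; linarith, ?_, ?_, by norm_num [hq]⟩
      · have hmul : x₁ * E < x₁ * (1 / x₁ + A * x₁ + B * x₁ ^ 2) :=
          mul_lt_mul_of_neg_left hE1 hx1neg
        have hinv : x₁ * (1 / x₁) = 1 := by
          rw [mul_one_div, div_self (ne_of_lt hx1neg)]
        simp only [hq]
        nlinarith [hmul, hinv]
      · have hmul : x₂ * (1 / x₂ + A * x₂ + B * x₂ ^ 2) < x₂ * E :=
          mul_lt_mul_of_neg_left hE2 hx2neg
        have hinv : x₂ * (1 / x₂) = 1 := by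
          rw [mul_one_div, div_self (ne_of_lt hx2neg)]
        simp only [hq]
        nlinarith [hmul, hinv]
    · -- a < 0 with q a < 0 ; q 0 = 1 > 0 ; q x₃ < 0 ; q d > 0 for large d
      obtain ⟨a, ha, hqa⟩ := cubic_small B A (-E) 1 hB 0
      obtain ⟨d, hd, hqd⟩ := cubic_large B A (-E) 1 hB x₃
      refine ⟨a, 0, x₃, d, ha, hx3pos, hd, by simp only [hq]; linarith, by norm_num [hq], ?_,
        by simp only [hq]; linarith⟩
      have hmul : x₃ * (1 / x₃ + A * x₃ + B * x₃ ^ 2) < x₃ * E :=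
        (mul_lt_mul_iff_right₀ hx3pos).mpr hE3
      have hinv : x₃ * (1 / x₃) = 1 := by
        rw [mul_one_div, div_self (ne_of_gt hx3pos)]
      simp only [hq]
      nlinarith [hmul, hinv]
  -- three roots by IVT
  obtain ⟨r₁, hr1mem, hr1⟩ := intermediate_value_Ioo (le_of_lt hab) (hqcont a b) ⟨hqa, hqb⟩
  obtain ⟨r₂, hr2mem, hr2⟩ := intermediate_value_Ioo' (le_of_lt hbc) (hqcont b c) ⟨hqc, hqb⟩
  obtain ⟨r₃, hr3mem, hr3⟩ := intermediate_value_Ioo (le_of_lt hcd) (hqcont c d) ⟨hqc, hqd⟩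
  have hr12 : r₁ < r₂ := lt_trans hr1mem.2 hr2mem.1
  have hr23 : r₂ < r₃ := lt_trans hr2mem.2 hr3mem.1
  have hr13 : r₁ < r₃ := lt_trans hr12 hr23
  simp only [hq] at hr1 hr2 hr3
  -- Vieta
  have e12 : B * (r₁ ^ 2 + r₁ * r₂ + r₂ ^ 2) + A * (r₁ + r₂) - E = 0 := by
    have hz : (r₁ - r₂) * (B * (r₁ ^ 2 + r₁ * r₂ + r₂ ^ 2) + A * (r₁ + r₂) - E) = 0 := by
      linear_combination hr1 - hr2
    rcases mul_eq_zero.mp hz with h' | h'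
    · exact absurd h' (sub_ne_zero.mpr (ne_of_lt hr12))
    · exact h'
  have e23 : B * (r₂ ^ 2 + r₂ * r₃ + r₃ ^ 2) + A * (r₂ + r₃) - E = 0 := by
    have hz : (r₂ - r₃) * (B * (r₂ ^ 2 + r₂ * r₃ + r₃ ^ 2) + A * (r₂ + r₃) - E) = 0 := by
      linear_combination hr2 - hr3
    rcases mul_eq_zero.mp hz with h' | h'
    · exact absurd h' (sub_ne_zero.mpr (ne_of_lt hr23))
    · exact h'
  have hAv : B * (r₁ + r₂ + r₃) + A = 0 := by
    have hz : (r₁ - r₃) * (B * (r₁ + r₂ + r₃) + A) = 0 := by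
      linear_combination e12 - e23
    rcases mul_eq_zero.mp hz with h' | h'
    · exact absurd h' (sub_ne_zero.mpr (ne_of_lt hr13))
    · exact h'
  have hEv : B * (r₁ * r₂ + r₁ * r₃ + r₂ * r₃) + E = 0 := by
    linear_combination -e12 + (r₁ + r₂) * hAv
  have hCv : B * (r₁ * r₂ * r₃) + 1 = 0 := by
    linear_combination hr1 - r₁ ^ 2 * hAv + r₁ * hEv
  refine ⟨r₁, r₂, r₃, fun z => ?_⟩
  have hAc : (B : ℂ) * ((r₁ : ℂ) + r₂ + r₃) + A = 0 := by exact_mod_cast congrArg Complex.ofReal hAv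
  have hEc : (B : ℂ) * ((r₁ : ℂ) * r₂ + (r₁ : ℂ) * r₃ + (r₂ : ℂ) * r₃) + E = 0 := by
    exact_mod_cast congrArg Complex.ofReal hEv
  have hCc : (B : ℂ) * ((r₁ : ℂ) * r₂ * r₃) + 1 = 0 := by
    exact_mod_cast congrArg Complex.ofReal hCv
  linear_combination z ^ 2 * hAc - z * hEc + hCc
end

section
/- Let A, B ∈ ℝ with B > 0 and A³ > 27B², and let x₁ < x₂ < x₃ be the three real roots of 2Bx³ + Ax² − 1 = 0. For every real E with E < g(x₁), the cubic Q_E(z) = Bz³ + Az² − Ez + 1 has exactly one real root r and a pair of nonreal complex-conjugate roots w and w̄, and these satisfy |r| < |w| = |w̄|; in particular the two largest-modulus roots have equal modulus while the GBZ condition |β₁| = |β₂| fails. -/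
set_option maxHeartbeats 1000000 in
/-- Let `B > 0`, `A³ > 27B²`, and let `x₁ < x₂ < x₃` be the three real roots of
`2Bx³ + Ax² − 1 = 0`. For every real `E < g(x₁)` (where `g(x) = 1/x + Ax + Bx²`),
the cubic `Q_E(z) = Bz³ + Az² − Ez + 1` has exactly one real root `r` and a pair
of nonreal complex-conjugate roots `w, w̄`, with `|r| < |w| = |w̄|`: the two
largest-modulus roots have equal modulus while the GBZ condition `|β₁| = |β₂|`
fails. -/
theorem gbz_condition_fails_below (A B : ℝ) (hB : 0 < B)
    (h : A ^ 3 > 27 * B ^ 2)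
    (x₁ x₂ x₃ : ℝ) (h12 : x₁ < x₂) (h23 : x₂ < x₃)
    (hroots : ∀ x : ℝ, 2 * B * x ^ 3 + A * x ^ 2 - 1 = 0 ↔ (x = x₁ ∨ x = x₂ ∨ x = x₃))
    (E : ℝ) (hE : E < 1 / x₁ + A * x₁ + B * x₁ ^ 2) :
    ∃ r : ℝ, ∃ w : ℂ, w.im ≠ 0 ∧
      (∀ z : ℂ, (B : ℂ) * z ^ 3 + (A : ℂ) * z ^ 2 - (E : ℂ) * z + 1 =
        (B : ℂ) * (z - (r : ℂ)) * (z - w) * (z - (starRingEnd ℂ) w)) ∧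
      ‖w‖ = ‖(starRingEnd ℂ) w‖ ∧
      |r| < ‖w‖ := by
  have hB' : B ≠ 0 := ne_of_gt hB
  have hA : 0 < A := by
    by_contra h'
    push_neg at h'
    nlinarith [sq_nonneg A, sq_nonneg B, mul_nonneg (neg_nonneg.mpr h') (sq_nonneg A)]
  have f1 : 2 * B * x₁ ^ 3 + A * x₁ ^ 2 - 1 = 0 := (hroots x₁).mpr (Or.inl rfl)
  have f2 : 2 * B * x₂ ^ 3 + A * x₂ ^ 2 - 1 = 0 := (hroots x₂).mpr (Or.inr (Or.inl rfl))
  have f3 : 2 * B * x₃ ^ 3 + A * x₃ ^ 2 - 1 = 0 := (hroots x₃).mpr (Or.inr (Or.inr rfl))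
  have h13 : x₁ < x₃ := h12.trans h23
  -- Vieta-type identities
  have p12 : 2 * B * (x₁ ^ 2 + x₁ * x₂ + x₂ ^ 2) + A * (x₁ + x₂) = 0 := by
    have hh : (x₁ - x₂) * (2 * B * (x₁ ^ 2 + x₁ * x₂ + x₂ ^ 2) + A * (x₁ + x₂)) = 0 := by
      linear_combination f1 - f2
    exact (mul_eq_zero.mp hh).resolve_left (sub_ne_zero.mpr h12.ne)
  have p23 : 2 * B * (x₂ ^ 2 + x₂ * x₃ + x₃ ^ 2) + A * (x₂ + x₃) = 0 := by
    have hh : (x₂ - x₃) * (2 * B * (x₂ ^ 2 + x₂ * x₃ + x₃ ^ 2) + A * (x₂ + x₃)) = 0 := by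
      linear_combination f2 - f3
    exact (mul_eq_zero.mp hh).resolve_left (sub_ne_zero.mpr h23.ne)
  have hsum : 2 * B * (x₁ + x₂ + x₃) + A = 0 := by
    have hh : (x₁ - x₃) * (2 * B * (x₁ + x₂ + x₃) + A) = 0 := by
      linear_combination p12 - p23
    exact (mul_eq_zero.mp hh).resolve_left (sub_ne_zero.mpr h13.ne)
  have h2B : 2 * B * (x₁ * x₂ + x₁ * x₃ + x₂ * x₃) = 0 := by
    linear_combination (x₁ + x₂) * hsum - p12
  have he2 : x₁ * x₂ + x₁ * x₃ + x₂ * x₃ = 0 := by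
    rcases mul_eq_zero.mp h2B with h' | h'
    · exact absurd h' (by positivity)
    · exact h'
  have he3 : 2 * B * (x₁ * x₂ * x₃) = 1 := by
    linear_combination f1 - x₁ ^ 2 * hsum + 2 * B * x₁ * he2
  -- factorization of the "critical point" cubic
  have hfact : ∀ x : ℝ, 2 * B * x ^ 3 + A * x ^ 2 - 1 =
      2 * B * (x - x₁) * (x - x₂) * (x - x₃) := by
    intro x
    linear_combination x ^ 2 * hsum - 2 * B * x * he2 + he3
  -- signs of the roots
  have hx3 : 0 < x₃ := by
    by_contra h'
    push_neg at h'
    have hx2 : x₂ < 0 := lt_of_lt_of_le h23 h'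
    have hx1 : x₁ < 0 := lt_trans h12 hx2
    nlinarith [mul_pos_of_neg_of_neg hx1 hx2, he3]
  have hx2 : x₂ < 0 := by
    rcases lt_trichotomy x₂ 0 with h' | h' | h'
    · exact h'
    · exfalso; rw [h'] at f2; nlinarith
    · exfalso
      have hx1 : 0 < x₁ ∨ x₁ < 0 := by
        rcases lt_trichotomy x₁ 0 with hh | hh | hh
        · exact Or.inr hh
        · rw [hh] at f1; nlinarith
        · exact Or.inl hh
      rcases hx1 with hh | hh
      · nlinarith [he2, mul_pos hh h', mul_pos hh hx3, mul_pos h' hx3]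
      · nlinarith [he3, mul_pos h' hx3]
  have hx1 : x₁ < 0 := h12.trans hx2
  -- the middle root is to the right of the inflection point  -A/(3B)
  have hmx2 : 3 * B * x₂ + A > 0 := by
    have hmneg : -(A / (3 * B)) < 0 := by
      have : 0 < A / (3 * B) := by positivity
      linarith
    have hfm' : 0 < 2 * B * (-(A / (3 * B))) ^ 3 + A * (-(A / (3 * B))) ^ 2 - 1 := by
      have hfm : 2 * B * (-(A / (3 * B))) ^ 3 + A * (-(A / (3 * B))) ^ 2 - 1
          = A ^ 3 / (27 * B ^ 2) - 1 := by
        field_simp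
        ring
      rw [hfm]
      have h1 : (1:ℝ) < A ^ 3 / (27 * B ^ 2) := (one_lt_div (by positivity)).mpr h
      linarith
    have hprod : (-(A / (3 * B)) - x₁) * (-(A / (3 * B)) - x₂) < 0 := by
      by_contra hcon
      push_neg at hcon
      have h5 : 0 ≤ (-(A / (3 * B)) - x₁) * (-(A / (3 * B)) - x₂) * (x₃ - -(A / (3 * B))) :=
        mul_nonneg hcon (by linarith)
      nlinarith [hfact (-(A / (3 * B))), hfm', mul_nonneg hB.le h5]
    have hmlt : -(A / (3 * B)) < x₂ := by
      by_contra hcon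
      push_neg at hcon
      have : 0 ≤ (-(A / (3 * B)) - x₁) * (-(A / (3 * B)) - x₂) :=
        mul_nonneg (by linarith) (by linarith)
      linarith
    have hcalc : 3 * B * (-(A / (3 * B))) = -A := by field_simp
    nlinarith [mul_lt_mul_of_pos_left hmlt (show (0:ℝ) < 3 * B by positivity), hcalc]
  -- x₂ is to the right of -sqrt(3/A), hence B x₂³ > -1
  have hBx2 : -1 < B * x₂ ^ 3 := by
    set s : ℝ := Real.sqrt (3 / A) with hs
    have hs2 : s ^ 2 = 3 / A := Real.sq_sqrt (by positivity)
    have hspos : 0 < s := Real.sqrt_pos.mpr (by positivity)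
    have hBs3 : B * s ^ 3 < 1 := by
      have h6 : (B * s ^ 3) ^ 2 = 27 * B ^ 2 / A ^ 3 := by
        have h7 : (B * s ^ 3) ^ 2 = B ^ 2 * (s ^ 2) ^ 3 := by ring
        rw [h7, hs2]
        field_simp
        ring
      have hlt : 27 * B ^ 2 / A ^ 3 < 1 := (div_lt_one (by positivity)).mpr h
      nlinarith [mul_pos hB (pow_pos hspos 3)]
    have hAs : A * s ^ 2 = 3 := by
      rw [hs2]; field_simp
    have hfs : 0 < 2 * B * (-s) ^ 3 + A * (-s) ^ 2 - 1 := by nlinarith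
    have hprod : (-s - x₁) * (-s - x₂) < 0 := by
      by_contra hcon
      push_neg at hcon
      have h5 : 0 ≤ (-s - x₁) * (-s - x₂) * (x₃ - -s) := mul_nonneg hcon (by linarith)
      nlinarith [hfact (-s), hfs, mul_nonneg hB.le h5]
    have hsx2 : -s < x₂ := by
      by_contra hcon
      push_neg at hcon
      have : 0 ≤ (-s - x₁) * (-s - x₂) := mul_nonneg (by linarith) (by linarith)
      linarith
    have hx2sq : 0 < x₂ ^ 2 + x₂ * (-s) + (-s) ^ 2 := by
      nlinarith [sq_nonneg (2 * x₂ - s), hspos]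
    have hcube : (-s) ^ 3 < x₂ ^ 3 := by
      nlinarith [mul_pos (sub_pos.mpr hsx2) hx2sq]
    nlinarith [mul_lt_mul_of_pos_left hcube hB]
  -- x₂ + 2 x₃ > 0
  have hx23 : 0 < x₂ + 2 * x₃ := by
    have hft : 2 * B * (-x₂/2) ^ 3 + A * (-x₂/2) ^ 2 - 1 = -3 * (B * x₂ ^ 3 + 1) / 4 := by
      linear_combination (1/4 : ℝ) * f2
    have hftneg : 2 * B * (-x₂/2) ^ 3 + A * (-x₂/2) ^ 2 - 1 < 0 := by
      rw [hft]; nlinarith [hBx2]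
    by_contra hcon
    push_neg at hcon
    have h1 : 0 < -x₂/2 - x₁ := by linarith
    have h2 : 0 < -x₂/2 - x₂ := by linarith
    have h3 : 0 ≤ -x₂/2 - x₃ := by linarith
    have h5 : 0 ≤ (-x₂/2 - x₁) * (-x₂/2 - x₂) * (-x₂/2 - x₃) :=
      mul_nonneg (mul_pos h1 h2).le h3
    nlinarith [hfact (-x₂/2), hftneg, mul_nonneg hB.le h5]
  have hbneg : B * x₂ + A + 2 * B * x₁ < 0 := by
    nlinarith [hsum, mul_pos hB hx23]
  -- the value g(x₁) in polynomial form, and E below it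
  have hE' : E < 3 * B * x₁ ^ 2 + 2 * A * x₁ := by
    have hx1' : x₁ ≠ 0 := ne_of_lt hx1
    have hg : 1 / x₁ + A * x₁ + B * x₁ ^ 2 = 3 * B * x₁ ^ 2 + 2 * A * x₁ := by
      field_simp
      linear_combination -f1
    rw [hg] at hE
    exact hE
  -- key identity for Q_E
  have hkey : ∀ x : ℝ, B * x ^ 3 + A * x ^ 2 - E * x + 1 =
      (x - x₁) ^ 2 * (B * x + A + 2 * B * x₁) + x * (3 * B * x₁ ^ 2 + 2 * A * x₁ - E) := by
    intro x
    linear_combination -f1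
  -- Q_E is negative on (-∞, x₂]
  have hQneg : ∀ x : ℝ, x ≤ x₂ → B * x ^ 3 + A * x ^ 2 - E * x + 1 < 0 := by
    intro x hx
    rw [hkey x]
    have h1 : (x - x₁) ^ 2 * (B * x + A + 2 * B * x₁) ≤ 0 := by
      apply mul_nonpos_of_nonneg_of_nonpos (sq_nonneg _)
      nlinarith [mul_le_mul_of_nonneg_left hx hB.le]
    have h2 : x * (3 * B * x₁ ^ 2 + 2 * A * x₁ - E) < 0 :=
      mul_neg_of_neg_of_pos (by linarith) (by linarith)
    linarith
  -- real root r of Q_E in (x₂, 0)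
  have hcont : Continuous fun x : ℝ => B * x ^ 3 + A * x ^ 2 - E * x + 1 := by fun_prop
  have hQx2 : B * x₂ ^ 3 + A * x₂ ^ 2 - E * x₂ + 1 < 0 := hQneg x₂ le_rfl
  have hmem : (0:ℝ) ∈ Set.Icc (B * x₂ ^ 3 + A * x₂ ^ 2 - E * x₂ + 1)
      (B * (0:ℝ) ^ 3 + A * (0:ℝ) ^ 2 - E * 0 + 1) := by
    constructor
    · linarith
    · norm_num
  obtain ⟨r, hrmem, hQr0⟩ := intermediate_value_Icc hx2.le hcont.continuousOn hmem
  have hQr : B * r ^ 3 + A * r ^ 2 - E * r + 1 = 0 := hQr0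
  have hrx2 : x₂ < r := by
    rcases lt_or_eq_of_le hrmem.1 with h' | h'
    · exact h'
    · exfalso; rw [← h'] at hQr; linarith [hQx2]
  have hr0 : r < 0 := by
    rcases lt_or_eq_of_le hrmem.2 with h' | h'
    · exact h'
    · exfalso; rw [h'] at hQr; norm_num at hQr
  -- the discriminant of the quadratic factor is negative
  have hΔ : (A + B * r) ^ 2 - 4 * B * (B * r ^ 2 + A * r - E) < 0 := by
    by_contra hcon
    push_neg at hcon
    set s' : ℝ := Real.sqrt ((A + B * r) ^ 2 - 4 * B * (B * r ^ 2 + A * r - E)) with hs'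
    have hs'2 : s' ^ 2 = (A + B * r) ^ 2 - 4 * B * (B * r ^ 2 + A * r - E) :=
      Real.sq_sqrt hcon
    have hs'0 : 0 ≤ s' := Real.sqrt_nonneg _
    set rm : ℝ := (-(A + B * r) - s') / (2 * B) with hrm
    set rp : ℝ := (-(A + B * r) + s') / (2 * B) with hrp
    have h4m : 4 * B * (B * rm ^ 2 + (A + B * r) * rm + (B * r ^ 2 + A * r - E)) =
        s' ^ 2 - ((A + B * r) ^ 2 - 4 * B * (B * r ^ 2 + A * r - E)) := by
      rw [hrm]; field_simp; ring
    have h4p : 4 * B * (B * rp ^ 2 + (A + B * r) * rp + (B * r ^ 2 + A * r - E)) =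
        s' ^ 2 - ((A + B * r) ^ 2 - 4 * B * (B * r ^ 2 + A * r - E)) := by
      rw [hrp]; field_simp; ring
    rw [hs'2, sub_self] at h4m h4p
    have hqm : B * rm ^ 2 + (A + B * r) * rm + (B * r ^ 2 + A * r - E) = 0 :=
      (mul_eq_zero.mp h4m).resolve_left (by positivity)
    have hqp : B * rp ^ 2 + (A + B * r) * rp + (B * r ^ 2 + A * r - E) = 0 :=
      (mul_eq_zero.mp h4p).resolve_left (by positivity)
    have hQm : B * rm ^ 3 + A * rm ^ 2 - E * rm + 1 = 0 := by
      have hsplit : B * rm ^ 3 + A * rm ^ 2 - E * rm + 1 =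
          (rm - r) * (B * rm ^ 2 + (A + B * r) * rm + (B * r ^ 2 + A * r - E)) := by
        linear_combination hQr
      rw [hsplit, hqm, mul_zero]
    have hQp : B * rp ^ 3 + A * rp ^ 2 - E * rp + 1 = 0 := by
      have hsplit : B * rp ^ 3 + A * rp ^ 2 - E * rp + 1 =
          (rp - r) * (B * rp ^ 2 + (A + B * r) * rp + (B * r ^ 2 + A * r - E)) := by
        linear_combination hQr
      rw [hsplit, hqp, mul_zero]
    have hm2 : x₂ < rm := by
      by_contra hc2
      push_neg at hc2
      exact absurd hQm (ne_of_lt (hQneg _ hc2))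
    have hp2 : x₂ < rp := by
      by_contra hc2
      push_neg at hc2
      exact absurd hQp (ne_of_lt (hQneg _ hc2))
    have hsum3 : B * (r + rm + rp) = -A := by
      rw [hrm, hrp]; field_simp; ring
    have hgt : B * (3 * x₂) < B * (r + rm + rp) :=
      mul_lt_mul_of_pos_left (by linarith) hB
    rw [hsum3] at hgt
    linarith only [hmx2, hgt]
  -- construct the complex conjugate pair
  have hΔ2 : 0 < 4 * B * (B * r ^ 2 + A * r - E) - (A + B * r) ^ 2 := by linarith
  set t : ℝ := Real.sqrt (4 * B * (B * r ^ 2 + A * r - E) - (A + B * r) ^ 2) with ht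
  have ht2 : t ^ 2 = 4 * B * (B * r ^ 2 + A * r - E) - (A + B * r) ^ 2 :=
    Real.sq_sqrt hΔ2.le
  have htpos : 0 < t := Real.sqrt_pos.mpr hΔ2
  set u : ℝ := -(A + B * r) / (2 * B) with hudef
  set v : ℝ := t / (2 * B) with hvdef
  have hvpos : 0 < v := by rw [hvdef]; positivity
  have hu' : 2 * B * u + (A + B * r) = 0 := by
    rw [hudef]; field_simp; ring
  have h1uv : 4 * B ^ 2 * (u ^ 2 + v ^ 2) = (A + B * r) ^ 2 + t ^ 2 := by
    rw [hudef, hvdef]; field_simp; ring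
  have h2uv : 4 * B * (B * (u ^ 2 + v ^ 2) - (B * r ^ 2 + A * r - E)) = 0 := by
    linear_combination h1uv + ht2
  have hc' : B * (u ^ 2 + v ^ 2) - (B * r ^ 2 + A * r - E) = 0 :=
    (mul_eq_zero.mp h2uv).resolve_left (by positivity)
  refine ⟨r, (u : ℂ) + (v : ℂ) * Complex.I, ?_, ?_, ?_, ?_⟩
  · -- nonreal
    simp only [Complex.add_im, Complex.ofReal_im, Complex.mul_im, Complex.ofReal_re,
      Complex.I_im, Complex.I_re, mul_zero, mul_one, zero_add, add_zero]
    exact ne_of_gt hvpos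
  · -- factorization
    intro z
    have hconj : (starRingEnd ℂ) ((u : ℂ) + (v : ℂ) * Complex.I)
        = (u : ℂ) - (v : ℂ) * Complex.I := by
      rw [map_add, map_mul, Complex.conj_ofReal, Complex.conj_ofReal, Complex.conj_I]
      ring
    rw [hconj]
    have hQrC : (B:ℂ) * (r:ℂ) ^ 3 + (A:ℂ) * (r:ℂ) ^ 2 - (E:ℂ) * (r:ℂ) + 1 = 0 := by
      exact_mod_cast congrArg (fun x : ℝ => (x : ℂ)) hQr
    have huC : 2 * (B:ℂ) * (u:ℂ) + ((A:ℂ) + (B:ℂ) * (r:ℂ)) = 0 := by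
      exact_mod_cast congrArg (fun x : ℝ => (x : ℂ)) hu'
    have hcC : (B:ℂ) * ((u:ℂ) ^ 2 + (v:ℂ) ^ 2) -
        ((B:ℂ) * (r:ℂ) ^ 2 + (A:ℂ) * (r:ℂ) - (E:ℂ)) = 0 := by
      exact_mod_cast congrArg (fun x : ℝ => (x : ℂ)) hc'
    linear_combination hQrC + ((z - (r:ℂ)) * z) * huC - (z - (r:ℂ)) * hcC +
      ((z - (r:ℂ)) * (B:ℂ) * (v:ℂ) ^ 2) * Complex.I_sq
  · exact (Complex.norm_conj _).symm
  · -- modulus comparison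
    have hnsq : Complex.normSq ((u : ℂ) + (v : ℂ) * Complex.I) = u ^ 2 + v ^ 2 := by
      simp [Complex.normSq_apply, Complex.add_re, Complex.add_im, Complex.ofReal_re,
        Complex.ofReal_im, Complex.mul_re, Complex.mul_im, Complex.I_re, Complex.I_im]
      ring
    have habs2 : ‖(u : ℂ) + (v : ℂ) * Complex.I‖ ^ 2 = u ^ 2 + v ^ 2 := by
      rw [Complex.sq_norm, hnsq]
    have hrc : r * (B * r ^ 2 + A * r - E) = -1 := by linear_combination hQr
    have hx2sq : 0 < x₂ ^ 2 := by have h0 : x₂ ≠ 0 := ne_of_lt hx2; positivity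
    have hq2 : 0 < r ^ 2 + r * x₂ + x₂ ^ 2 := by
      linarith [sq_nonneg (2 * r + x₂), hx2sq]
    have hcube : x₂ ^ 3 < r ^ 3 := by
      linarith [mul_pos (sub_pos.mpr hrx2) hq2]
    have hBr3 : -1 < B * r ^ 3 := by
      linarith [mul_lt_mul_of_pos_left hcube hB, hBx2]
    have h9 : r * ((B * r ^ 2 + A * r - E) - B * r ^ 2) < 0 := by
      have hexp : r * ((B * r ^ 2 + A * r - E) - B * r ^ 2) =
          r * (B * r ^ 2 + A * r - E) - B * r ^ 3 := by ring
      rw [hexp, hrc]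
      linarith [hBr3]
    have hpos : 0 < (B * r ^ 2 + A * r - E) - B * r ^ 2 := by
      by_contra hcon
      push_neg at hcon
      have h10 : 0 ≤ r * ((B * r ^ 2 + A * r - E) - B * r ^ 2) := by
        have := mul_nonneg (neg_nonneg.mpr hr0.le) (neg_nonneg.mpr hcon)
        linarith [this, neg_mul_neg r ((B * r ^ 2 + A * r - E) - B * r ^ 2)]
      linarith
    have hfin2 : r ^ 2 < u ^ 2 + v ^ 2 := by
      by_contra hcon
      push_neg at hcon
      have h10 : B * (u ^ 2 + v ^ 2 - r ^ 2) ≤ 0 :=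
        mul_nonpos_of_nonneg_of_nonpos hB.le (by linarith)
      have h11 : B * (u ^ 2 + v ^ 2 - r ^ 2) =
          (B * (u ^ 2 + v ^ 2) - (B * r ^ 2 + A * r - E)) +
            ((B * r ^ 2 + A * r - E) - B * r ^ 2) := by ring
      rw [h11, hc'] at h10
      linarith
    have hfin : |r| ^ 2 < ‖(u : ℂ) + (v : ℂ) * Complex.I‖ ^ 2 := by
      rw [sq_abs, habs2]
      exact hfin2
    exact lt_of_pow_lt_pow_left₀ 2 (norm_nonneg _) hfin
end
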